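/- arXiv:1903.08216 — 8 statements merged into one kernel-verified Lean document; each statement's English description precedes it below -/
import Mathlib

section
/- Let φ: ℝ → ℝ be compactly supported, twice continuously differentiable, satisfy Σ_{j∈ℤ} j^m φ(t − j) = t^m for all t ∈ ℝ and m = 0, 1, 2, and satisfy ∫_ℝ φ(t) dt = 1. Define ψ(q, s) := Σ_{j∈ℤ} max(j − q + s, 0) · φ''(q − j). Then there exists c > 0 such that −∫_h^∞ ∫_0^1 ψ(t, s) dt ds = 0 for every h > c, and −∫_h^∞ ∫_0^1 ψ(t, s) dt ds = −1 for every h < −c. -/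
open MeasureTheory

/-- ψ(q, s) := Σ_{j∈ℤ} max(j − q + s, 0) · φ''(q − j). -/
noncomputable def psi (φ : ℝ → ℝ) (q s : ℝ) : ℝ :=
  ∑' j : ℤ, max ((j : ℝ) - q + s) 0 * deriv (deriv φ) (q - (j : ℝ))

private lemma deriv_step {f g g' : ℝ → ℝ} {c : ℤ → ℝ} {J : Finset ℤ}
    (hf : Differentiable ℝ f) (hg : ∀ t, HasDerivAt g (g' t) t)
    {U : Set ℝ} (hU : IsOpen U)
    (h : ∀ t ∈ U, ∑ j ∈ J, c j * f (t - (j : ℝ)) = g t) :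
    ∀ t ∈ U, ∑ j ∈ J, c j * deriv f (t - (j : ℝ)) = g' t := by
  intro t ht
  have hF : HasDerivAt (fun x => ∑ j ∈ J, c j * f (x - (j : ℝ)))
      (∑ j ∈ J, c j * deriv f (t - (j : ℝ))) t := by
    apply HasDerivAt.fun_sum
    intro j _
    have h1 : HasDerivAt (fun x : ℝ => x - (j : ℝ)) 1 t := (hasDerivAt_id t).sub_const _
    have h2 : HasDerivAt f (deriv f (t - (j : ℝ))) (t - (j : ℝ)) := (hf _).hasDerivAt
    simpa using (h2.comp t h1).const_mul (c j)
  have heq : (fun x => ∑ j ∈ J, c j * f (x - (j : ℝ))) =ᶠ[nhds t] g :=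
    Filter.eventually_of_mem (hU.mem_nhds ht) h
  calc ∑ j ∈ J, c j * deriv f (t - (j : ℝ))
      = deriv (fun x => ∑ j ∈ J, c j * f (x - (j : ℝ))) t := hF.deriv.symm
    _ = deriv g t := heq.deriv_eq
    _ = g' t := (hg t).deriv

theorem stmt0 (φ : ℝ → ℝ)
    (hsupp : HasCompactSupport φ)
    (hsmooth : ContDiff ℝ 2 φ)
    (hA1 : ∀ m : ℕ, m ≤ 2 → ∀ t : ℝ,
      ∑' j : ℤ, (j : ℝ) ^ m * φ (t - (j : ℝ)) = t ^ m)
    (hA5 : ∫ t : ℝ, φ t = 1) :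
    ∃ c : ℝ, 0 < c ∧
      (∀ h : ℝ, c < h →
        -∫ s in Set.Ioi h, ∫ t in (0:ℝ)..1, psi φ t s = (0 : ℝ)) ∧
      (∀ h : ℝ, h < -c →
        -∫ s in Set.Ioi h, ∫ t in (0:ℝ)..1, psi φ t s = (-1 : ℝ)) := by
  classical
  -- support bound
  obtain ⟨r, hr⟩ : ∃ r, tsupport φ ⊆ Metric.closedBall 0 r :=
    hsupp.isBounded.subset_closedBall 0
  set A : ℝ := max r 1 with hA_def
  have hA1' : (1 : ℝ) ≤ A := le_max_right _ _
  have hA0 : (0 : ℝ) < A := lt_of_lt_of_le one_pos hA1'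
  have hsupA : tsupport φ ⊆ Set.Icc (-A) A := by
    intro x hx
    have := hr hx
    rw [Metric.mem_closedBall, Real.dist_eq, sub_zero] at this
    have h1 : |x| ≤ A := this.trans (le_max_left _ _)
    exact ⟨neg_le_of_abs_le h1, le_of_abs_le h1⟩
  have hφ0 : ∀ x : ℝ, x ∉ Set.Icc (-A) A → φ x = 0 := fun x hx =>
    image_eq_zero_of_notMem_tsupport (fun hc => hx (hsupA hc))
  have hφ'0 : ∀ x : ℝ, x ∉ Set.Icc (-A) A → deriv φ x = 0 := by
    intro x hx
    by_contra hne
    exact hx (hsupA (support_deriv_subset (by simpa using hne)))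
  have hφ''0 : ∀ x : ℝ, x ∉ Set.Icc (-A) A → deriv (deriv φ) x = 0 := by
    intro x hx
    by_contra hne
    have h1 : x ∈ tsupport (deriv φ) := support_deriv_subset (by simpa using hne)
    have h2 : x ∈ tsupport φ := by
      have : tsupport (deriv φ) ⊆ tsupport φ :=
        closure_minimal support_deriv_subset isClosed_closure
      exact this h1
    exact hx (hsupA h2)
  -- differentiability
  have h2' : ContDiff ℝ 1 (deriv φ) := by
    have : ContDiff ℝ (1 + 1) φ := by exact_mod_cast hsmooth
    exact (contDiff_succ_iff_deriv.mp this).2.2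
  have hdφ : Differentiable ℝ φ := hsmooth.differentiable (by norm_num)
  have hdφ' : Differentiable ℝ (deriv φ) := h2'.differentiable one_ne_zero
  have hcφ'' : Continuous (deriv (deriv φ)) := (contDiff_one_iff_deriv.mp h2').2
  -- finite index set
  set J : Finset ℤ := Finset.Icc ⌈-1 - A⌉ ⌊2 + A⌋ with hJ_def
  set U : Set ℝ := Set.Ioo (-1 : ℝ) 2 with hU_def
  have hUopen : IsOpen U := isOpen_Ioo
  have hIccU : Set.Icc (0:ℝ) 1 ⊆ U := fun x hx => ⟨by linarith [hx.1], by linarith [hx.2]⟩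
  have hout : ∀ t ∈ U, ∀ j ∉ J, (t - (j:ℝ)) ∉ Set.Icc (-A) A := by
    intro t ht j hj
    rw [hJ_def, Finset.mem_Icc, not_and_or] at hj
    rcases hj with hj | hj
    · push_neg at hj
      have : (j : ℝ) < -1 - A := by
        have := Int.lt_ceil.mp hj
        exact this
      intro hmem
      have := hmem.2
      have ht1 : -1 < t := ht.1
      linarith
    · push_neg at hj
      have : (2 : ℝ) + A < (j : ℝ) := Int.floor_lt.mp hj
      intro hmem
      have := hmem.1
      have ht2 : t < 2 := ht.2
      linarith
  -- base identities as finite sums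
  have hbase : ∀ m : ℕ, m ≤ 2 → ∀ t ∈ U,
      ∑ j ∈ J, ((j : ℝ) ^ m) * φ (t - (j : ℝ)) = t ^ m := by
    intro m hm t ht
    rw [← hA1 m hm t]
    exact (tsum_eq_sum (fun j hj => by rw [hφ0 _ (hout t ht j hj), mul_zero])).symm
  -- differentiate twice
  have hD1 : ∀ m : ℕ, m ≤ 2 → ∀ t ∈ U,
      ∑ j ∈ J, ((j : ℝ) ^ m) * deriv φ (t - (j : ℝ)) = (m : ℝ) * t ^ (m - 1) := by
    intro m hm
    exact deriv_step hdφ (fun t => hasDerivAt_pow m t) hUopen (hbase m hm)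
  have hD2 : ∀ m : ℕ, m ≤ 2 → ∀ t ∈ U,
      ∑ j ∈ J, ((j : ℝ) ^ m) * deriv (deriv φ) (t - (j : ℝ))
        = (m : ℝ) * (((m - 1 : ℕ) : ℝ) * t ^ (m - 1 - 1)) := by
    intro m hm
    exact deriv_step hdφ'
      (fun t => (hasDerivAt_pow (m - 1) t).const_mul (m : ℝ)) hUopen (hD1 m hm)
  have hT0 : ∀ t ∈ U, ∑ j ∈ J, deriv (deriv φ) (t - (j : ℝ)) = 0 := by
    intro t ht
    have := hD2 0 (by norm_num) t ht
    simpa using this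
  have hT1 : ∀ t ∈ U, ∑ j ∈ J, (j : ℝ) * deriv (deriv φ) (t - (j : ℝ)) = 0 := by
    intro t ht
    have := hD2 1 (by norm_num) t ht
    simpa using this
  have hT2 : ∀ t ∈ U, ∑ j ∈ J, (j : ℝ) ^ 2 * deriv (deriv φ) (t - (j : ℝ)) = 2 := by
    intro t ht
    have := hD2 2 (by norm_num) t ht
    simpa using this
  -- finite-sum version of psi
  set ψJ : ℝ → ℝ → ℝ :=
    fun t s => ∑ j ∈ J, max ((j : ℝ) - t + s) 0 * deriv (deriv φ) (t - (j : ℝ)) with hψJ_def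
  have hpsi : ∀ t ∈ Set.Icc (0:ℝ) 1, ∀ s : ℝ, psi φ t s = ψJ t s := by
    intro t ht s
    exact tsum_eq_sum (fun j hj => by
      rw [hφ''0 _ (hout t (hIccU ht) j hj), mul_zero])
  have hcont : Continuous fun p : ℝ × ℝ => ψJ p.1 p.2 := by
    apply continuous_finset_sum
    intro j _
    exact (((continuous_const.sub continuous_fst).add continuous_snd).max
      continuous_const).mul (hcφ''.comp (continuous_fst.sub continuous_const))
  -- the constant
  set c : ℝ := A + 2 with hc_def
  have hc0 : (0 : ℝ) < c := by positivity
  -- vanishing of ψJ for large |s|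
  have hzpos : ∀ s : ℝ, c ≤ s → ∀ t ∈ Set.Icc (0:ℝ) 1, ψJ t s = 0 := by
    intro s hs t ht
    have hstep : ψJ t s = ∑ j ∈ J, ((j : ℝ) - t + s) * deriv (deriv φ) (t - (j : ℝ)) := by
      apply Finset.sum_congr rfl
      intro j _
      by_cases hz : deriv (deriv φ) (t - (j : ℝ)) = 0
      · rw [hz, mul_zero, mul_zero]
      · have hmem : t - (j : ℝ) ∈ Set.Icc (-A) A := by
          by_contra hn; exact hz (hφ''0 _ hn)
        have : (0 : ℝ) < (j : ℝ) - t + s := by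
          have := hmem.2
          have ht1 : t ≤ 1 := ht.2
          have : (j : ℝ) ≥ t - A := by linarith [hmem.2]
          have : c ≤ s := hs
          rw [hc_def] at this
          linarith [hmem.2]
        rw [max_eq_left this.le]
    rw [hstep]
    have hexp : ∑ j ∈ J, ((j : ℝ) - t + s) * deriv (deriv φ) (t - (j : ℝ))
        = (∑ j ∈ J, (j : ℝ) * deriv (deriv φ) (t - (j : ℝ)))
          + (s - t) * ∑ j ∈ J, deriv (deriv φ) (t - (j : ℝ)) := by
      rw [Finset.mul_sum, ← Finset.sum_add_distrib]
      apply Finset.sum_congr rfl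
      intro j _; ring
    rw [hexp, hT1 t (hIccU ht), hT0 t (hIccU ht), mul_zero, add_zero]
  have hzneg : ∀ s : ℝ, s ≤ -c → ∀ t ∈ Set.Icc (0:ℝ) 1, ψJ t s = 0 := by
    intro s hs t ht
    apply Finset.sum_eq_zero
    intro j _
    by_cases hz : deriv (deriv φ) (t - (j : ℝ)) = 0
    · rw [hz, mul_zero]
    · have hmem : t - (j : ℝ) ∈ Set.Icc (-A) A := by
        by_contra hn; exact hz (hφ''0 _ hn)
      have hle : (j : ℝ) - t + s ≤ 0 := by
        have h1 : (j : ℝ) ≤ t + A := by linarith [hmem.1]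
        have ht0 : 0 ≤ t := ht.1
        rw [hc_def] at hs
        linarith
      rw [max_eq_right hle, zero_mul]
  -- inner s-integral computation
  have hmaxint : ∀ a : ℝ, |a| ≤ A →
      ∫ s in (-c)..c, max (a + s) 0 = (a + c) ^ 2 / 2 := by
    intro a ha
    obtain ⟨hal, har⟩ := abs_le.mp ha
    have ha1 : -c ≤ -a := by rw [hc_def]; linarith
    have ha2 : -a ≤ c := by rw [hc_def]; linarith
    have hcontf : Continuous fun s : ℝ => max (a + s) 0 :=
      (continuous_const.add continuous_id).max continuous_const
    have hsplit := intervalIntegral.integral_add_adjacent_intervals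
      (hcontf.intervalIntegrable (μ := volume) (-c) (-a))
      (hcontf.intervalIntegrable (μ := volume) (-a) c)
    rw [← hsplit]
    have h1 : ∫ s in (-c)..(-a), max (a + s) 0 = 0 := by
      have h0 : ∫ s in (-c)..(-a), max (a + s) 0 = ∫ s in (-c)..(-a), (0:ℝ) := by
        apply intervalIntegral.integral_congr
        intro s hs
        rw [Set.uIcc_of_le ha1] at hs
        exact max_eq_right (by linarith [hs.2])
      simpa using h0
    have h2 : ∫ s in (-a)..c, max (a + s) 0 = (a + c) ^ 2 / 2 := by
      have e1 : ∫ s in (-a)..c, max (a + s) 0 = ∫ s in (-a)..c, (a + s) := by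
        apply intervalIntegral.integral_congr
        intro s hs
        rw [Set.uIcc_of_le ha2] at hs
        exact max_eq_left (by linarith [hs.1])
      rw [e1, intervalIntegral.integral_add (intervalIntegrable_const (c := a)) intervalIntegral.intervalIntegrable_id,
        intervalIntegral.integral_const, integral_id]
      simp only [smul_eq_mul]
      ring
    rw [h1, h2, zero_add]
  have hinner : ∀ t ∈ Set.Icc (0:ℝ) 1, ∫ s in (-c)..c, ψJ t s = 1 := by
    intro t ht
    have htU : t ∈ U := hIccU ht
    have hstep : ∫ s in (-c)..c, ψJ t s
        = ∑ j ∈ J, ∫ s in (-c)..c, max ((j : ℝ) - t + s) 0 * deriv (deriv φ) (t - (j : ℝ)) := by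
      apply intervalIntegral.integral_finset_sum
      intro j _
      exact (((continuous_const.add continuous_id).max continuous_const).mul
        continuous_const).intervalIntegrable _ _
    rw [hstep]
    have hterm : ∀ j ∈ J,
        (∫ s in (-c)..c, max ((j : ℝ) - t + s) 0 * deriv (deriv φ) (t - (j : ℝ)))
          = (((j : ℝ) - t + c) ^ 2 / 2) * deriv (deriv φ) (t - (j : ℝ)) := by
      intro j _
      rw [intervalIntegral.integral_mul_const]
      by_cases hz : deriv (deriv φ) (t - (j : ℝ)) = 0
      · rw [hz, mul_zero, mul_zero]
      · have hmem : t - (j : ℝ) ∈ Set.Icc (-A) A := by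
          by_contra hn; exact hz (hφ''0 _ hn)
        have habs : |(j : ℝ) - t| ≤ A := by
          rw [abs_sub_comm]
          exact abs_le.mpr ⟨by linarith [hmem.1], by linarith [hmem.2]⟩
        rw [hmaxint ((j : ℝ) - t) habs]
    rw [Finset.sum_congr rfl hterm]
    calc ∑ j ∈ J, (((j : ℝ) - t + c) ^ 2 / 2) * deriv (deriv φ) (t - (j : ℝ))
        = (1/2) * (∑ j ∈ J, (j : ℝ) ^ 2 * deriv (deriv φ) (t - (j : ℝ)))
          + ((c - t) * (∑ j ∈ J, (j : ℝ) * deriv (deriv φ) (t - (j : ℝ)))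
          + ((c - t) ^ 2 / 2) * ∑ j ∈ J, deriv (deriv φ) (t - (j : ℝ))) := by
          rw [Finset.mul_sum, Finset.mul_sum, Finset.mul_sum, ← Finset.sum_add_distrib,
            ← Finset.sum_add_distrib]
          exact Finset.sum_congr rfl (fun j _ => by ring)
      _ = 1 := by rw [hT2 t htU, hT1 t htU, hT0 t htU]; ring
  -- function G
  set G : ℝ → ℝ := fun s => ∫ t in (0:ℝ)..1, ψJ t s with hG_def
  have hinner_eq : ∀ s : ℝ, (∫ t in (0:ℝ)..1, psi φ t s) = G s := by
    intro s
    apply intervalIntegral.integral_congr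
    intro t ht
    rw [Set.uIcc_of_le (zero_le_one)] at ht
    exact hpsi t ht s
  have hGcont : Continuous G := by
    apply intervalIntegral.continuous_parametric_intervalIntegral_of_continuous'
    exact hcont.comp continuous_swap
  have hGpos : ∀ s : ℝ, c ≤ s → G s = 0 := by
    intro s hs
    have h0 : G s = ∫ t in (0:ℝ)..1, (0:ℝ) := by
      apply intervalIntegral.integral_congr
      intro t ht
      rw [Set.uIcc_of_le (zero_le_one)] at ht
      exact hzpos s hs t ht
    simpa using h0
  have hGneg : ∀ s : ℝ, s ≤ -c → G s = 0 := by
    intro s hs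
    have h0 : G s = ∫ t in (0:ℝ)..1, (0:ℝ) := by
      apply intervalIntegral.integral_congr
      intro t ht
      rw [Set.uIcc_of_le (zero_le_one)] at ht
      exact hzneg s hs t ht
    simpa using h0
  -- Fubini
  have hfub : ∫ s in (-c)..c, G s = 1 := by
    have hmcc : (-c : ℝ) ≤ c := by linarith
    have hGset : ∀ s : ℝ, G s = ∫ t in Set.Ioc (0:ℝ) 1, ψJ t s := fun s =>
      intervalIntegral.integral_of_le zero_le_one
    have hkey : ∫ s in Set.Ioc (-c) c, ∫ t in Set.Ioc (0:ℝ) 1, ψJ t s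
        = ∫ t in Set.Ioc (0:ℝ) 1, ∫ s in Set.Ioc (-c) c, ψJ t s := by
      apply integral_integral_swap
      rw [Measure.prod_restrict]
      have hcomp : IntegrableOn (fun p : ℝ × ℝ => ψJ p.2 p.1)
          (Set.Icc (-c) c ×ˢ Set.Icc (0:ℝ) 1) (volume.prod volume) :=
        (hcont.comp continuous_swap).continuousOn.integrableOn_compact
          (isCompact_Icc.prod isCompact_Icc)
      exact hcomp.mono_set
        (Set.prod_mono Set.Ioc_subset_Icc_self Set.Ioc_subset_Icc_self)
    have hlast : ∫ t in Set.Ioc (0:ℝ) 1, ∫ s in Set.Ioc (-c) c, ψJ t s = 1 := by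
      have h1 : ∫ t in Set.Ioc (0:ℝ) 1, ∫ s in Set.Ioc (-c) c, ψJ t s
          = ∫ t in Set.Ioc (0:ℝ) 1, (1:ℝ) := by
        apply setIntegral_congr_fun measurableSet_Ioc
        intro t ht
        show (∫ s in Set.Ioc (-c) c, ψJ t s) = 1
        rw [← intervalIntegral.integral_of_le hmcc]
        exact hinner t (Set.Ioc_subset_Icc_self ht)
      rw [h1]
      simp
    rw [intervalIntegral.integral_of_le hmcc]
    simp only [hGset]
    rw [hkey, hlast]
  -- assembly
  refine ⟨c, hc0, ?_, ?_⟩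
  · intro h hh
    simp only [hinner_eq]
    have : ∫ s in Set.Ioi h, G s = ∫ s in Set.Ioi h, (0:ℝ) := by
      apply setIntegral_congr_fun measurableSet_Ioi
      intro s hs
      exact hGpos s (le_of_lt (lt_trans hh hs))
    rw [this, integral_zero, neg_zero]
  · intro h hh
    simp only [hinner_eq]
    have hhc : h ≤ c := by linarith
    have hhmc : h ≤ -c := le_of_lt hh
    have hmcc : (-c : ℝ) ≤ c := by linarith
    have hIoi : ∫ s in Set.Ioi h, G s = 1 := by
      have hsplit : Set.Ioc h c ∪ Set.Ioi c = Set.Ioi h := Set.Ioc_union_Ioi_eq_Ioi hhc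
      have hint1 : IntegrableOn G (Set.Ioc h c) := hGcont.integrableOn_Ioc
      have hint2 : IntegrableOn G (Set.Ioi c) :=
        (integrableOn_congr_fun (fun s (hs : s ∈ Set.Ioi c) => hGpos s (le_of_lt hs))
          measurableSet_Ioi).mpr integrableOn_zero
      rw [← hsplit, setIntegral_union (Set.Ioc_disjoint_Ioi le_rfl) measurableSet_Ioi
        hint1 hint2]
      have hz2 : ∫ s in Set.Ioi c, G s = 0 := by
        have h0 : ∫ s in Set.Ioi c, G s = ∫ s in Set.Ioi c, (0:ℝ) :=
          setIntegral_congr_fun measurableSet_Ioi (fun s hs => hGpos s (le_of_lt hs))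
        simpa using h0
      have hsplit2 : Set.Ioc h (-c) ∪ Set.Ioc (-c) c = Set.Ioc h c :=
        Set.Ioc_union_Ioc_eq_Ioc hhmc hmcc
      have hz1 : ∫ s in Set.Ioc h c, G s = 1 := by
        rw [← hsplit2, setIntegral_union (Set.Ioc_disjoint_Ioc_of_le le_rfl) measurableSet_Ioc
          hGcont.integrableOn_Ioc hGcont.integrableOn_Ioc]
        have hz3 : ∫ s in Set.Ioc h (-c), G s = 0 := by
          have h0 : ∫ s in Set.Ioc h (-c), G s = ∫ s in Set.Ioc h (-c), (0:ℝ) :=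
            setIntegral_congr_fun measurableSet_Ioc (fun s hs => hGneg s hs.2)
          simpa using h0
        have hz4 : ∫ s in Set.Ioc (-c) c, G s = 1 := by
          rw [← intervalIntegral.integral_of_le hmcc]
          exact hfub
        rw [hz3, hz4, zero_add]
      rw [hz1, hz2, add_zero]
    rw [hIoi]
end

section
/- Let φ: ℝ → ℝ be compactly supported and twice continuously differentiable. Define ψ(q, s) := Σ_{j∈ℤ} max(j − q + s, 0) · φ''(q − j). Then for every s ∈ ℝ, ∫_0^1 ψ(t, s) dt = φ(s). -/
open MeasureTheory

theorem stmt1 (φ : ℝ → ℝ)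
    (hsupp : HasCompactSupport φ)
    (hsmooth : ContDiff ℝ 2 φ) :
    ∀ s : ℝ, ∫ t in (0:ℝ)..1, psi φ t s = φ s := by
  intro s
  classical
  have h2 : ContDiff ℝ (1 + 1) φ := hsmooth
  have h1 : ContDiff ℝ 1 (deriv φ) := (contDiff_succ_iff_deriv.mp h2).2.2
  have hc2 : Continuous (deriv (deriv φ)) := h1.continuous_deriv le_rfl
  have hφdiff : Differentiable ℝ φ := hsmooth.differentiable (by norm_num)
  have hφ'diff : Differentiable ℝ (deriv φ) := h1.differentiable one_ne_zero
  -- radius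
  obtain ⟨R0, hR0⟩ := hsupp.isCompact.isBounded.subset_closedBall (0 : ℝ)
  set R : ℝ := max R0 0 with hRdef
  have hRnn : (0:ℝ) ≤ R := le_max_right _ _
  have hR : tsupport φ ⊆ Metric.closedBall 0 R :=
    hR0.trans (Metric.closedBall_subset_closedBall (le_max_left _ _))
  have ht1 : tsupport (deriv φ) ⊆ tsupport φ :=
    closure_minimal support_deriv_subset (isClosed_tsupport _)
  have ht2 : tsupport (deriv (deriv φ)) ⊆ tsupport (deriv φ) :=
    closure_minimal support_deriv_subset (isClosed_tsupport _)
  have hRsub2 : tsupport (deriv (deriv φ)) ⊆ Metric.closedBall 0 R :=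
    (ht2.trans ht1).trans hR
  have hRsub1 : tsupport (deriv φ) ⊆ Metric.closedBall 0 R := ht1.trans hR
  have hz2 : ∀ x : ℝ, R < |x| → deriv (deriv φ) x = 0 := by
    intro x hx
    apply image_eq_zero_of_notMem_tsupport
    intro hmem
    have := hRsub2 hmem
    rw [Metric.mem_closedBall, Real.dist_eq, sub_zero] at this
    linarith
  have hz1 : ∀ x : ℝ, R < |x| → deriv φ x = 0 := by
    intro x hx
    apply image_eq_zero_of_notMem_tsupport
    intro hmem
    have := hRsub1 hmem
    rw [Metric.mem_closedBall, Real.dist_eq, sub_zero] at this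
    linarith
  have hz0 : ∀ x : ℝ, R < |x| → φ x = 0 := by
    intro x hx
    apply image_eq_zero_of_notMem_tsupport
    intro hmem
    have := hR hmem
    rw [Metric.mem_closedBall, Real.dist_eq, sub_zero] at this
    linarith
  set N : ℕ := ⌈R + |s| + 2⌉₊ with hN
  have hNge : R + |s| + 2 ≤ (N : ℝ) := Nat.le_ceil _
  have hs0 : (0:ℝ) ≤ |s| := abs_nonneg s
  have hsle : -|s| ≤ s := neg_abs_le s
  have hsle' : s ≤ |s| := le_abs_self s
  -- the truncating finite set
  set M : ℕ := 2 * N + 3 with hM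
  set S : Finset ℤ := (Finset.range M).image (fun i : ℕ => (N + 1 : ℤ) - (i : ℤ)) with hS
  have hmemS : ∀ j : ℤ, -(N + 1 : ℤ) ≤ j → j ≤ (N + 1 : ℤ) → j ∈ S := by
    intro j h1' h2'
    simp only [hS, Finset.mem_image, Finset.mem_range, hM]
    exact ⟨((N + 1 : ℤ) - j).toNat, by omega, by omega⟩
  -- the single-variable kernel
  set g : ℝ → ℝ := fun u => max (s - u) 0 * deriv (deriv φ) u with hg
  have hgc : Continuous g :=
    ((continuous_const.sub continuous_id).max continuous_const).mul hc2
  have hgint : ∀ a b : ℝ, IntervalIntegrable g volume a b := fun a b =>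
    hgc.intervalIntegrable a b
  -- Step A: truncate the tsum on [0,1]
  have hA : ∀ t ∈ Set.uIcc (0:ℝ) 1, psi φ t s
      = ∑ j ∈ S, max ((j : ℝ) - t + s) 0 * deriv (deriv φ) (t - (j : ℝ)) := by
    intro t ht
    rw [Set.uIcc_of_le (by norm_num)] at ht
    refine tsum_eq_sum ?_
    intro j hj
    have hb : j ≤ -(N + 2 : ℤ) ∨ (N + 2 : ℤ) ≤ j := by
      by_contra hcon
      push_neg at hcon
      exact hj (hmemS j (by omega) (by omega))
    have habs : (N : ℝ) + 2 ≤ |(j : ℝ)| := by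
      rcases hb with hb | hb
      · have hb' : (j : ℝ) ≤ -((N:ℝ) + 2) := by exact_mod_cast hb
        rw [abs_of_nonpos (by linarith)]
        linarith
      · have hb' : ((N:ℝ) + 2) ≤ (j : ℝ) := by exact_mod_cast hb
        rw [abs_of_nonneg (by linarith)]
        linarith
    have htj : R < |t - (j : ℝ)| := by
      have h1' : |(j:ℝ)| - |t| ≤ |(j:ℝ) - t| := abs_sub_abs_le_abs_sub _ _
      rw [abs_sub_comm] at h1'
      have ht' : |t| ≤ 1 := abs_le.mpr ⟨by linarith [ht.1], ht.2⟩
      linarith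
    rw [hz2 _ htj, mul_zero]
  rw [intervalIntegral.integral_congr hA]
  -- Step C: swap integral and finite sum
  rw [intervalIntegral.integral_finset_sum
      (f := fun (j : ℤ) (t : ℝ) => max ((j : ℝ) - t + s) 0 * deriv (deriv φ) (t - (j : ℝ)))
      (fun j _ => (show Continuous fun t : ℝ =>
          max ((j : ℝ) - t + s) 0 * deriv (deriv φ) (t - (j : ℝ)) by fun_prop).intervalIntegrable 0 1)]
  -- Step D & E: rewrite each term as a translated integral of g
  have key : ∀ j ∈ S, (∫ t in (0:ℝ)..1, max ((j : ℝ) - t + s) 0 * deriv (deriv φ) (t - (j : ℝ)))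
      = ∫ u in (0 - (j:ℝ))..(1 - (j:ℝ)), g u := by
    intro j _
    rw [← intervalIntegral.integral_comp_sub_right g (j : ℝ)]
    refine intervalIntegral.integral_congr fun t _ => ?_
    simp only [hg]
    ring_nf
  rw [Finset.sum_congr rfl key]
  rw [hS, Finset.sum_image (by intro a _ b _ h; have h' : (N + 1 : ℤ) - (a : ℤ) = (N + 1 : ℤ) - (b : ℤ) := h; omega)]
  trans (∫ u in (-((N:ℝ)+1))..((N:ℝ)+2), g u)
  · have hadj := intervalIntegral.sum_integral_adjacent_intervals
      (a := fun i => (i : ℝ) - ((N:ℝ) + 1)) (f := g) (μ := volume) (n := M)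
      (fun k _ => hgint _ _)
    refine (Finset.sum_congr rfl fun i _ => ?_).trans (hadj.trans ?_)
    · congr 1 <;> push_cast <;> ring
    · congr 1 <;> push_cast [hM] <;> ring
  -- Step G: compute the integral of g
  set A : ℝ := -((N:ℝ)+1) with hA'
  set B : ℝ := (N:ℝ)+2 with hB'
  have hAs : A < s := by rw [hA']; linarith
  have hsB : s < B := by rw [hB']; linarith
  have habsA : |A| = (N:ℝ) + 1 := by
    rw [hA', abs_neg, abs_of_nonneg (by positivity)]
  have hRA : R < |A| := by rw [habsA]; linarith
  -- split the integral at s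
  have hsplit := intervalIntegral.integral_add_adjacent_intervals
    (hgint A s) (hgint s B)
  rw [← hsplit]
  -- the right part vanishes
  have hright : (∫ u in s..B, g u) = 0 := by
    rw [intervalIntegral.integral_congr (g := fun _ => (0:ℝ)) ?_,
      intervalIntegral.integral_zero]
    intro u hu
    rw [Set.uIcc_of_le hsB.le] at hu
    simp only [hg]
    rw [max_eq_right (by linarith [hu.1]), zero_mul]
  rw [hright, add_zero]
  -- the left part: integration by parts
  have hleft1 : (∫ u in A..s, g u) = ∫ u in A..s, (s - u) * deriv (deriv φ) u := by
    refine intervalIntegral.integral_congr fun u hu => ?_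
    rw [Set.uIcc_of_le hAs.le] at hu
    simp only [hg]
    rw [max_eq_left (by linarith [hu.2])]
  rw [hleft1]
  have hibp := intervalIntegral.integral_mul_deriv_eq_deriv_mul
    (u := fun x => s - x) (u' := fun _ => (-1 : ℝ)) (v := deriv φ)
    (v' := deriv (deriv φ)) (a := A) (b := s)
    (fun x _ => (hasDerivAt_id x).const_sub s)
    (fun x _ => (hφ'diff x).hasDerivAt)
    (intervalIntegrable_const)
    (hc2.intervalIntegrable A s)
  rw [hibp]
  have hfund : (∫ x in A..s, deriv φ x) = φ s - φ A :=
    intervalIntegral.integral_deriv_eq_sub (fun x _ => hφdiff x)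
      ((hsmooth.continuous_deriv (by norm_num)).intervalIntegrable A s)
  have hφA : φ A = 0 := hz0 A hRA
  have hφ'A : deriv φ A = 0 := hz1 A hRA
  rw [hφ'A]
  have : (∫ x in A..s, (-1 : ℝ) * deriv φ x) = -(φ s - φ A) := by
    rw [← hfund, ← intervalIntegral.integral_neg]
    refine intervalIntegral.integral_congr fun x _ => by ring
  rw [this, hφA]
  ring
end

section
/- Let φ: ℝ → ℝ be compactly supported, twice continuously differentiable, and satisfy Σ_{j∈ℤ} j^m φ(t − j) = t^m for all t ∈ ℝ and m = 0, 1, 2. Define ψ(q, s) := Σ_{j∈ℤ} max(j − q + s, 0) · φ''(q − j). Then there exists c > 0 such that ψ(q, s) = 0 for all q ∈ ℝ whenever |s| ≥ c. -/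
open MeasureTheory

/-- Second derivative of a finite sum of shifted copies of φ, identified through a local
eventual equality. -/
lemma sum_shift_deriv2 (φ f : ℝ → ℝ) (hφ1 : Differentiable ℝ φ)
    (hφ2 : Differentiable ℝ (deriv φ)) (F : Finset ℤ) (c : ℤ → ℝ) (q : ℝ)
    (h : (fun t => ∑ j ∈ F, c j * φ (t - (j : ℝ))) =ᶠ[nhds q] f) :
    ∑ j ∈ F, c j * deriv (deriv φ) (q - (j : ℝ)) = deriv (deriv f) q := by
  have hshift : ∀ (g : ℝ → ℝ), Differentiable ℝ g → ∀ (j : ℤ) (t : ℝ),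
      HasDerivAt (fun u => g (u - (j : ℝ))) (deriv g (t - (j : ℝ))) t := by
    intro g hg j t
    have h1 : HasDerivAt (fun u : ℝ => u - (j : ℝ)) 1 t := (hasDerivAt_id t).sub_const _
    have h2 : HasDerivAt g (deriv g (t - (j : ℝ))) (t - (j : ℝ)) := (hg _).hasDerivAt
    have h3 := h2.comp t h1
    rw [mul_one] at h3
    exact h3
  have hd1 : ∀ t : ℝ, HasDerivAt (fun u => ∑ j ∈ F, c j * φ (u - (j : ℝ)))
      (∑ j ∈ F, c j * deriv φ (t - (j : ℝ))) t := by
    intro t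
    exact HasDerivAt.fun_sum fun j _ => (hshift φ hφ1 j t).const_mul (c j)
  have hD1 : deriv (fun u => ∑ j ∈ F, c j * φ (u - (j : ℝ)))
      = fun t => ∑ j ∈ F, c j * deriv φ (t - (j : ℝ)) := by
    funext t; exact (hd1 t).deriv
  have hd2 : HasDerivAt (fun t => ∑ j ∈ F, c j * deriv φ (t - (j : ℝ)))
      (∑ j ∈ F, c j * deriv (deriv φ) (q - (j : ℝ))) q :=
    HasDerivAt.fun_sum fun j _ => (hshift (deriv φ) hφ2 j q).const_mul (c j)
  have key : deriv (deriv (fun u => ∑ j ∈ F, c j * φ (u - (j : ℝ)))) q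
      = ∑ j ∈ F, c j * deriv (deriv φ) (q - (j : ℝ)) := by
    rw [hD1]; exact hd2.deriv
  rw [← key]
  exact (h.deriv).deriv_eq

theorem stmt2 (φ : ℝ → ℝ)
    (hsupp : HasCompactSupport φ)
    (hsmooth : ContDiff ℝ 2 φ)
    (hA1 : ∀ m : ℕ, m ≤ 2 → ∀ t : ℝ,
      ∑' j : ℤ, (j : ℝ) ^ m * φ (t - (j : ℝ)) = t ^ m) :
    ∃ c : ℝ, 0 < c ∧ ∀ s q : ℝ, c ≤ |s| → psi φ q s = 0 := by
  have hφ1 : Differentiable ℝ φ := hsmooth.differentiable (by norm_num)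
  have hφ2 : Differentiable ℝ (deriv φ) := by
    have := (contDiff_succ_iff_deriv.mp (show ContDiff ℝ (1+1) φ by norm_num [hsmooth])).2.2
    exact this.differentiable one_ne_zero
  -- bound the support
  obtain ⟨r, hr⟩ := hsupp.isCompact.isBounded.subset_closedBall 0
  set R : ℝ := max r 0 + 1 with hRdef
  have hR0 : (0:ℝ) < R := by positivity
  have hzero : ∀ x : ℝ, R ≤ |x| → φ x = 0 ∧ deriv φ x = 0 ∧ deriv (deriv φ) x = 0 := by
    intro x hx
    have hnot : x ∉ tsupport φ := by
      intro hmem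
      have := hr hmem
      simp only [Metric.mem_closedBall, Real.dist_eq, sub_zero] at this
      have : |x| ≤ max r 0 := le_trans this (le_max_left r 0)
      linarith [hx]
    have h0 : φ x = 0 := image_eq_zero_of_notMem_tsupport hnot
    have hnot1 : x ∉ tsupport (deriv φ) := by
      intro hmem
      exact hnot (closure_minimal support_deriv_subset isClosed_closure hmem)
    have h1 : deriv φ x = 0 := image_eq_zero_of_notMem_tsupport hnot1
    have hnot2 : x ∉ tsupport (deriv (deriv φ)) := by
      intro hmem
      exact hnot1 (closure_minimal support_deriv_subset isClosed_closure hmem)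
    exact ⟨h0, h1, image_eq_zero_of_notMem_tsupport hnot2⟩
  refine ⟨R + 1, by positivity, ?_⟩
  intro s q hs
  set F : Finset ℤ := Finset.Icc ⌈q - (R+1)⌉ ⌊q + (R+1)⌋ with hF
  -- vanishing outside F, for t near q
  have hout : ∀ j : ℤ, j ∉ F → ∀ t : ℝ, |t - q| ≤ 1 → R ≤ |t - (j:ℝ)| := by
    intro j hj t ht
    rw [hF, Finset.mem_Icc, not_and_or, not_le, not_le] at hj
    rcases hj with hj | hj
    · have : (j : ℝ) < q - (R+1) := by exact_mod_cast Int.lt_ceil.mp hj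
      have h1 : -1 ≤ t - q := (abs_le.mp ht).1
      have : R ≤ t - (j:ℝ) := by linarith
      exact le_trans this (le_abs_self _)
    · have : q + (R+1) < (j : ℝ) := by exact_mod_cast Int.floor_lt.mp hj
      have h1 : t - q ≤ 1 := (abs_le.mp ht).2
      have : t - (j:ℝ) ≤ -R := by linarith
      calc R ≤ -(t - (j:ℝ)) := by linarith
        _ ≤ |t - (j:ℝ)| := neg_le_abs _
  -- local finitization of hA1 and the two key sums
  have hsum : ∀ m : ℕ, m ≤ 2 →
      (fun t => ∑ j ∈ F, (j:ℝ)^m * φ (t - (j:ℝ))) =ᶠ[nhds q] fun t => t ^ m := by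
    intro m hm
    have hball : Metric.ball q 1 ∈ nhds q := Metric.ball_mem_nhds q one_pos
    filter_upwards [hball] with t ht
    have ht' : |t - q| ≤ 1 := le_of_lt (by simpa [Real.dist_eq] using ht)
    rw [← hA1 m hm t]
    exact (tsum_eq_sum fun j hj => by
      rw [(hzero _ (hout j hj t ht')).1, mul_zero]).symm
  have key : ∀ m : ℕ, m ≤ 1 → ∑ j ∈ F, (j:ℝ)^m * deriv (deriv φ) (q - (j:ℝ)) = 0 := by
    intro m hm
    have := sum_shift_deriv2 φ (fun t => t ^ m) hφ1 hφ2 F (fun j => (j:ℝ)^m) q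
      (hsum m (le_trans hm one_le_two))
    rw [this]
    interval_cases m
    · simp
    · have h1 : deriv (fun t : ℝ => t ^ 1) = fun _ => (1:ℝ) := by
        funext t; simp
      rw [h1]; simp
  have key0 : ∑ j ∈ F, deriv (deriv φ) (q - (j:ℝ)) = 0 := by
    have := key 0 (by norm_num); simpa using this
  have key1 : ∑ j ∈ F, (j:ℝ) * deriv (deriv φ) (q - (j:ℝ)) = 0 := by
    have := key 1 (by norm_num); simpa using this
  -- psi equals a finite sum over F
  have hpsi : psi φ q s = ∑ j ∈ F, max ((j:ℝ) - q + s) 0 * deriv (deriv φ) (q - (j:ℝ)) := by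
    apply tsum_eq_sum
    intro j hj
    have : R ≤ |q - (j:ℝ)| := by
      have := hout j hj q (by simp)
      simpa using this
    rw [(hzero _ this).2.2, mul_zero]
  -- relevant j have |q - j| < R
  have hrel : ∀ j : ℤ, deriv (deriv φ) (q - (j:ℝ)) ≠ 0 → |q - (j:ℝ)| < R := by
    intro j hj
    by_contra h
    exact hj ((hzero _ (le_of_not_gt h)).2.2)
  rcases le_abs.mp hs with hpos | hneg
  · -- s ≥ R + 1 : max is the linear function on relevant terms
    rw [hpsi]
    have : ∀ j ∈ F, max ((j:ℝ) - q + s) 0 * deriv (deriv φ) (q - (j:ℝ))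
        = ((j:ℝ) - q + s) * deriv (deriv φ) (q - (j:ℝ)) := by
      intro j _
      by_cases hj : deriv (deriv φ) (q - (j:ℝ)) = 0
      · rw [hj, mul_zero, mul_zero]
      · have hlt := hrel j hj
        have : -(R) < (j:ℝ) - q := by
          have := (abs_lt.mp hlt).2
          linarith
        have hge : 0 ≤ (j:ℝ) - q + s := by linarith
        rw [max_eq_left hge]
    rw [Finset.sum_congr rfl this]
    have expand : ∀ j ∈ F, ((j:ℝ) - q + s) * deriv (deriv φ) (q - (j:ℝ))
        = (j:ℝ) * deriv (deriv φ) (q - (j:ℝ)) + (s - q) * deriv (deriv φ) (q - (j:ℝ)) := by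
      intro j _; ring
    rw [Finset.sum_congr rfl expand, Finset.sum_add_distrib, key1, ← Finset.mul_sum, key0]
    ring
  · -- s ≤ -(R+1) : every term vanishes
    rw [hpsi]
    apply Finset.sum_eq_zero
    intro j _
    by_cases hj : deriv (deriv φ) (q - (j:ℝ)) = 0
    · rw [hj, mul_zero]
    · have hlt := hrel j hj
      have h1 : (j:ℝ) - q < R := by
        have := (abs_lt.mp hlt).1
        linarith
      have hs' : s ≤ -(R+1) := by linarith
      have : (j:ℝ) - q + s ≤ 0 := by linarith
      rw [max_eq_right this, zero_mul]
end

section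
/- Let φ: ℝ → ℝ be compactly supported, twice continuously differentiable, and satisfy Σ_{j∈ℤ} j^m φ(t − j) = t^m for all t ∈ ℝ and m = 0, 1, 2. Let g: ℝ → ℝ be three times differentiable with g, g', g'', g''' bounded on ℝ. Then there exists C > 0 such that for all ε ∈ (0, 1] and all t ∈ ℝ, | ε^{-2} Σ_{j∈ℤ} g(εj) φ''(t/ε − j) − g''(t) | ≤ C ε. -/
lemma aux_seg (t y s : ℝ) (hs : s ∈ segment ℝ t y) : |s - t| ≤ |y - t| := by
  rw [segment_eq_image'] at hs
  obtain ⟨θ, hθ, rfl⟩ := hs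
  rw [add_sub_cancel_left, smul_eq_mul, abs_mul]
  nlinarith [abs_nonneg (y - t), abs_of_nonneg hθ.1, hθ.1, hθ.2]

lemma aux_sum_hasDerivAt (f : ℝ → ℝ) (hf : Differentiable ℝ f) (S : Finset ℤ) (c : ℤ → ℝ)
    (s : ℝ) :
    HasDerivAt (fun u => ∑ j ∈ S, c j * f (u - (j : ℝ))) (∑ j ∈ S, c j * deriv f (s - (j : ℝ))) s := by
  apply HasDerivAt.fun_sum
  intro j _
  have h1 : HasDerivAt (fun u : ℝ => f (u - (j : ℝ))) (deriv f (s - (j : ℝ))) s := by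
    have h := (hf (s - (j : ℝ))).hasDerivAt
    exact (h.comp s ((hasDerivAt_id s).sub_const (j : ℝ))).congr_deriv (by simp)
  exact h1.const_mul (c j)

lemma aux_taylor (g : ℝ → ℝ) (hg1 : Differentiable ℝ g) (hg2 : Differentiable ℝ (deriv g))
    (hg3 : Differentiable ℝ (deriv (deriv g))) (B : ℝ)
    (hB3 : ∀ x, |deriv (deriv (deriv g)) x| ≤ B) (t y : ℝ) :
    |g y - g t - deriv g t * (y - t) - deriv (deriv g) t / 2 * (y - t) ^ 2|
      ≤ B * |y - t| ^ 3 := by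
  have hB0 : 0 ≤ B := (abs_nonneg _).trans (hB3 t)
  -- step i
  have h2nd : ∀ y, |deriv (deriv g) y - deriv (deriv g) t| ≤ B * |y - t| := by
    intro z
    have := convex_univ.norm_image_sub_le_of_norm_hasDerivWithin_le
      (f := deriv (deriv g)) (f' := deriv (deriv (deriv g)))
      (fun u _ => (hg3 u).hasDerivAt.hasDerivWithinAt)
      (fun u _ => by simpa [Real.norm_eq_abs] using hB3 u)
      (Set.mem_univ t) (Set.mem_univ z)
    simpa [Real.norm_eq_abs] using this
  -- step ii
  have h1st : ∀ y, |deriv g y - deriv g t - deriv (deriv g) t * (y - t)|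
      ≤ (B * |y - t|) * |y - t| := by
    intro z
    have hder : ∀ s ∈ segment ℝ t z,
        HasDerivWithinAt (fun u => deriv g u - deriv g t - deriv (deriv g) t * (u - t))
          (deriv (deriv g) s - deriv (deriv g) t) (segment ℝ t z) s := by
      intro s _
      have h := ((hg2 s).hasDerivAt.sub_const (deriv g t)).fun_sub
        (((hasDerivAt_id s).sub_const t).const_mul (deriv (deriv g) t))
      simpa using h.hasDerivWithinAt
    have hbd : ∀ s ∈ segment ℝ t z,
        ‖deriv (deriv g) s - deriv (deriv g) t‖ ≤ B * |z - t| := by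
      intro s hs
      have := (h2nd s).trans (mul_le_mul_of_nonneg_left (aux_seg t z s hs) hB0)
      simpa [Real.norm_eq_abs] using this
    have := (convex_segment t z).norm_image_sub_le_of_norm_hasDerivWithin_le hder hbd
      (left_mem_segment ℝ t z) (right_mem_segment ℝ t z)
    simpa [Real.norm_eq_abs] using this
  -- step iii
  have hder : ∀ s ∈ segment ℝ t y,
      HasDerivWithinAt (fun u => g u - g t - deriv g t * (u - t)
          - deriv (deriv g) t / 2 * (u - t) ^ 2)
        (deriv g s - deriv g t - deriv (deriv g) t * (s - t)) (segment ℝ t y) s := by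
    intro s _
    have hq : HasDerivAt (fun u : ℝ => (u - t) ^ 2) (2 * (s - t)) s := by
      have := ((hasDerivAt_id s).sub_const t).fun_pow 2
      simpa [mul_comm] using this
    have h := (((hg1 s).hasDerivAt.sub_const (g t)).fun_sub
        (((hasDerivAt_id s).sub_const t).const_mul (deriv g t))).fun_sub
      (hq.const_mul (deriv (deriv g) t / 2))
    have h2 : HasDerivAt (fun u => g u - g t - deriv g t * (u - t)
          - deriv (deriv g) t / 2 * (u - t) ^ 2)
        (deriv g s - deriv g t - deriv (deriv g) t * (s - t)) s := by
      exact h.congr_deriv (by ring)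
    exact h2.hasDerivWithinAt
  have hbd : ∀ s ∈ segment ℝ t y,
      ‖deriv g s - deriv g t - deriv (deriv g) t * (s - t)‖ ≤ (B * |y - t|) * |y - t| := by
    intro s hs
    have h1 := h1st s
    have h2 := aux_seg t y s hs
    have : (B * |s - t|) * |s - t| ≤ (B * |y - t|) * |y - t| := by
      nlinarith [abs_nonneg (s - t), abs_nonneg (y - t), hB0, mul_le_mul_of_nonneg_left h2 hB0]
    simpa [Real.norm_eq_abs] using h1.trans this
  have hfin := (convex_segment t y).norm_image_sub_le_of_norm_hasDerivWithin_le hder hbd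
    (left_mem_segment ℝ t y) (right_mem_segment ℝ t y)
  have : |g y - g t - deriv g t * (y - t) - deriv (deriv g) t / 2 * (y - t) ^ 2|
      ≤ ((B * |y - t|) * |y - t|) * |y - t| := by
    simpa [Real.norm_eq_abs] using hfin
  calc _ ≤ ((B * |y - t|) * |y - t|) * |y - t| := this
    _ = B * |y - t| ^ 3 := by ring

theorem stmt4 (φ : ℝ → ℝ)
    (hsupp : HasCompactSupport φ)
    (hsmooth : ContDiff ℝ 2 φ)
    (hA1 : ∀ m : ℕ, m ≤ 2 → ∀ t : ℝ,
      ∑' j : ℤ, (j : ℝ) ^ m * φ (t - (j : ℝ)) = t ^ m)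
    (g : ℝ → ℝ)
    (hg1 : Differentiable ℝ g)
    (hg2 : Differentiable ℝ (deriv g))
    (hg3 : Differentiable ℝ (deriv (deriv g)))
    (B : ℝ)
    (hB : ∀ x : ℝ, |g x| ≤ B ∧ |deriv g x| ≤ B ∧ |deriv (deriv g) x| ≤ B ∧
      |deriv (deriv (deriv g)) x| ≤ B) :
    ∃ C : ℝ, 0 < C ∧ ∀ ε : ℝ, ε ∈ Set.Ioc (0:ℝ) 1 → ∀ t : ℝ,
      |(∑' j : ℤ, g (ε * j) * deriv (deriv φ) (t / ε - (j : ℝ))) / ε ^ 2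
        - deriv (deriv g) t| ≤ C * ε := by
  obtain ⟨hφdiff, hφ1cd⟩ : Differentiable ℝ φ ∧ ContDiff ℝ 1 (deriv φ) := by
    rw [show (2 : WithTop ℕ∞) = 1 + 1 from rfl, contDiff_succ_iff_deriv] at hsmooth
    exact ⟨hsmooth.1, hsmooth.2.2⟩
  obtain ⟨hφ1diff, hψcont⟩ := contDiff_one_iff_deriv.mp hφ1cd
  set ψ := deriv (deriv φ) with hψdef
  have hψsupp : HasCompactSupport ψ := hsupp.deriv.deriv
  have hψsub : tsupport ψ ⊆ tsupport φ :=
    (closure_minimal support_deriv_subset isClosed_closure).trans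
      (closure_minimal support_deriv_subset isClosed_closure)
  obtain ⟨M0, hM0⟩ := hsupp.isCompact.isBounded.subset_closedBall 0
  set M := max M0 1 with hMdef
  have hM1 : (1:ℝ) ≤ M := le_max_right _ _
  have hφzero : ∀ u : ℝ, M < |u| → φ u = 0 := by
    intro u hu
    apply image_eq_zero_of_notMem_tsupport
    intro hmem
    have h1 := hM0 hmem
    simp only [Metric.mem_closedBall, Real.dist_eq, sub_zero] at h1
    have : M0 ≤ M := le_max_left _ _
    linarith
  have hψzero : ∀ u : ℝ, M < |u| → ψ u = 0 := by
    intro u hu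
    apply image_eq_zero_of_notMem_tsupport
    intro hmem
    have h1 := hM0 (hψsub hmem)
    simp only [Metric.mem_closedBall, Real.dist_eq, sub_zero] at h1
    have : M0 ≤ M := le_max_left _ _
    linarith
  obtain ⟨K0, hK0⟩ := hψsupp.exists_bound_of_continuous hψcont
  set K := max K0 0 with hKdef
  have hK : ∀ u, |ψ u| ≤ K := fun u => le_trans (by simpa using hK0 u) (le_max_left _ _)
  have hKnn : (0:ℝ) ≤ K := le_max_right _ _
  have hB0 : (0:ℝ) ≤ B := (abs_nonneg _).trans (hB 0).1
  refine ⟨(2*M+3) * ((B+1) * ((K+1) * (M+1)^3)), ?_, ?_⟩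
  · apply mul_pos (by linarith)
    apply mul_pos (by linarith)
    exact mul_pos (by linarith) (pow_pos (by linarith) 3)
  intro ε hε t
  obtain ⟨hε0, hε1⟩ := hε
  set x := t / ε with hxdef
  have hεx : ε * x = t := by rw [hxdef]; field_simp [hε0.ne']
  set a := ⌈x - M - 1⌉ with hadef
  set b := ⌊x + M + 1⌋ with hbdef
  set S := Finset.Icc a b with hSdef
  have hout : ∀ s ∈ Set.Ioo (x - 1) (x + 1), ∀ j ∉ S, φ (s - j) = 0 ∧ ψ (s - j) = 0 := by
    intro s hs j hj
    have hj' : j < a ∨ b < j := by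
      rw [hSdef, Finset.mem_Icc] at hj; omega
    have hMlt : M < |s - j| := by
      rcases hj' with h | h
      · have h1 : (a:ℝ) < x - M - 1 + 1 := Int.ceil_lt_add_one _
        have h2 : (j:ℝ) ≤ (a:ℝ) - 1 := by
          have : (j:ℤ) ≤ a - 1 := by omega
          exact_mod_cast this
        have hs1 := hs.1
        rw [lt_abs]; left; linarith
      · have h1 : x + M + 1 - 1 < (b:ℝ) := Int.sub_one_lt_floor _
        have h2 : (b:ℝ) + 1 ≤ (j:ℝ) := by
          have : b + 1 ≤ j := by omega
          exact_mod_cast this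
        have hs2 := hs.2
        rw [lt_abs]; right; linarith
    exact ⟨hφzero _ hMlt, hψzero _ hMlt⟩
  have hxmem : x ∈ Set.Ioo (x - 1) (x + 1) := by constructor <;> linarith
  have hstep2 : ∀ m : ℕ, m ≤ 2 → ∑ j ∈ S, (j:ℝ)^m * ψ (x - j)
      = (m:ℝ) * ((m - 1 : ℕ) : ℝ) * x ^ (m - 1 - 1) := by
    intro m hm
    have hF : ∀ u : ℝ, HasDerivAt (fun u => ∑ j ∈ S, (j:ℝ)^m * φ (u - j))
        (∑ j ∈ S, (j:ℝ)^m * deriv φ (u - j)) u :=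
      fun u => aux_sum_hasDerivAt φ hφdiff S _ u
    have hG : ∀ u : ℝ, HasDerivAt (fun u => ∑ j ∈ S, (j:ℝ)^m * deriv φ (u - j))
        (∑ j ∈ S, (j:ℝ)^m * ψ (u - j)) u :=
      fun u => aux_sum_hasDerivAt (deriv φ) hφ1diff S _ u
    have hFeq : ∀ s ∈ Set.Ioo (x - 1) (x + 1),
        ∑ j ∈ S, (j:ℝ)^m * φ (s - j) = s ^ m := by
      intro s hs
      rw [← hA1 m hm s]
      exact (tsum_eq_sum (fun j hj => by rw [(hout s hs j hj).1, mul_zero])).symm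
    have hGeq : ∀ s ∈ Set.Ioo (x - 1) (x + 1),
        ∑ j ∈ S, (j:ℝ)^m * deriv φ (s - j) = (m:ℝ) * s ^ (m - 1) := by
      intro s hs
      have h1 : deriv (fun u => ∑ j ∈ S, (j:ℝ)^m * φ (u - j)) s
          = deriv (fun u : ℝ => u ^ m) s :=
        Filter.EventuallyEq.deriv_eq (Filter.eventuallyEq_of_mem (isOpen_Ioo.mem_nhds hs) hFeq)
      rw [(hF s).deriv, deriv_pow_field] at h1
      exact h1
    have h2 : deriv (fun u => ∑ j ∈ S, (j:ℝ)^m * deriv φ (u - j)) x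
        = deriv (fun s : ℝ => (m:ℝ) * s ^ (m - 1)) x :=
      Filter.EventuallyEq.deriv_eq (Filter.eventuallyEq_of_mem (isOpen_Ioo.mem_nhds hxmem) hGeq)
    rw [(hG x).deriv] at h2
    rw [h2, deriv_const_mul_field, deriv_pow_field]
    ring
  have e0 : ∑ j ∈ S, ψ (x - j) = 0 := by
    have h := hstep2 0 (by norm_num); simpa using h
  have e1 : ∑ j ∈ S, (j:ℝ) * ψ (x - j) = 0 := by
    have h := hstep2 1 (by norm_num); simpa using h
  have e2 : ∑ j ∈ S, (j:ℝ)^2 * ψ (x - j) = 2 := by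
    have h := hstep2 2 (by norm_num); simpa using h
  have htsum : ∑' j : ℤ, g (ε * j) * ψ (x - j) = ∑ j ∈ S, g (ε * j) * ψ (x - j) :=
    tsum_eq_sum (fun j hj => by rw [(hout x hxmem j hj).2, mul_zero])
  have hkey : ∑ j ∈ S, g (ε * j) * ψ (x - j)
      = ε^2 * deriv (deriv g) t
        + ∑ j ∈ S, (g (ε*j) - g t - deriv g t * (ε*j - t)
            - deriv (deriv g) t / 2 * (ε*j - t)^2) * ψ (x - j) := by
    have hexp : ∀ j ∈ S, g (ε * j) * ψ (x - j)
        = g t * ψ (x - j)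
          + deriv g t * (ε * ((j:ℝ) * ψ (x - j)) - t * ψ (x - j))
          + deriv (deriv g) t / 2 * (ε^2 * ((j:ℝ)^2 * ψ (x - j))
              - 2*ε*t*((j:ℝ) * ψ (x - j)) + t^2 * ψ (x - j))
          + (g (ε*j) - g t - deriv g t * (ε*j - t)
              - deriv (deriv g) t / 2 * (ε*j - t)^2) * ψ (x - j) := by
      intro j _; ring
    rw [Finset.sum_congr rfl hexp, Finset.sum_add_distrib, Finset.sum_add_distrib,
      Finset.sum_add_distrib]
    have s1 : ∑ j ∈ S, g t * ψ (x - j) = 0 := by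
      rw [← Finset.mul_sum, e0, mul_zero]
    have s2 : ∑ j ∈ S, deriv g t * (ε * ((j:ℝ) * ψ (x - j)) - t * ψ (x - j)) = 0 := by
      rw [← Finset.mul_sum, Finset.sum_sub_distrib, ← Finset.mul_sum, ← Finset.mul_sum,
        e1, e0]
      ring
    have s3 : ∑ j ∈ S, deriv (deriv g) t / 2 * (ε^2 * ((j:ℝ)^2 * ψ (x - j))
        - 2*ε*t*((j:ℝ) * ψ (x - j)) + t^2 * ψ (x - j)) = ε^2 * deriv (deriv g) t := by
      rw [← Finset.mul_sum, Finset.sum_add_distrib, Finset.sum_sub_distrib,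
        ← Finset.mul_sum, ← Finset.mul_sum, ← Finset.mul_sum, e0, e1, e2]
      ring
    rw [s1, s2, s3]
    ring
  have hjx : ∀ j ∈ S, |ε * j - t| ≤ ε * (M + 1) := by
    intro j hj
    rw [hSdef, Finset.mem_Icc] at hj
    have h1 : x - M - 1 ≤ (j:ℝ) := le_trans (Int.le_ceil _) (by exact_mod_cast hj.1)
    have h2 : (j:ℝ) ≤ x + M + 1 := le_trans (by exact_mod_cast hj.2) (Int.floor_le _)
    have h3 : ε * j - t = ε * ((j:ℝ) - x) := by rw [← hεx]; ring
    rw [h3, abs_mul, abs_of_pos hε0]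
    have h4 : |(j:ℝ) - x| ≤ M + 1 := abs_le.mpr ⟨by linarith, by linarith⟩
    exact mul_le_mul_of_nonneg_left h4 hε0.le
  have hεM : (0:ℝ) ≤ ε * (M + 1) := mul_nonneg hε0.le (by linarith)
  have hterm : ∀ j ∈ S, |(g (ε*j) - g t - deriv g t * (ε*j - t)
      - deriv (deriv g) t / 2 * (ε*j - t)^2) * ψ (x - j)|
      ≤ (B+1) * ((K+1) * (M+1)^3) * ε^3 := by
    intro j hj
    rw [abs_mul]
    have h1 := aux_taylor g hg1 hg2 hg3 B (fun u => (hB u).2.2.2) t (ε*j)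
    have h4 : |ε*(j:ℝ) - t|^3 ≤ (ε*(M+1))^3 := pow_le_pow_left₀ (abs_nonneg _) (hjx j hj) 3
    have h5 : |g (ε*j) - g t - deriv g t * (ε*j - t) - deriv (deriv g) t / 2 * (ε*j - t)^2|
        * |ψ (x - j)| ≤ (B * (ε*(M+1))^3) * K :=
      mul_le_mul (h1.trans (mul_le_mul_of_nonneg_left h4 hB0)) (hK _) (abs_nonneg _)
        (mul_nonneg hB0 (pow_nonneg hεM 3))
    refine h5.trans ?_
    have hM1' : (0:ℝ) ≤ M + 1 := by linarith
    have e : (B * (ε*(M+1))^3) * K = (B*K) * ((M+1)^3 * ε^3) := by ring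
    have e' : (B+1) * ((K+1) * (M+1)^3) * ε^3 = ((B+1)*(K+1)) * ((M+1)^3 * ε^3) := by ring
    rw [e, e']
    apply mul_le_mul_of_nonneg_right (by nlinarith) (by positivity)
  have hcard : (S.card : ℝ) ≤ 2*M + 3 := by
    have hc : S.card = (b + 1 - a).toNat := Int.card_Icc a b
    rcases le_or_gt (b + 1 - a) 0 with h | h
    · rw [hc, Int.toNat_of_nonpos h]
      norm_num; linarith
    · have h1 : ((b + 1 - a).toNat : ℤ) = b + 1 - a := Int.toNat_of_nonneg h.le
      have hco : ((b + 1 - a).toNat : ℝ) = (b:ℝ) + 1 - (a:ℝ) := by exact_mod_cast h1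
      have hb' : (b:ℝ) ≤ x + M + 1 := Int.floor_le _
      have ha' : x - M - 1 ≤ (a:ℝ) := Int.le_ceil _
      rw [hc, hco]
      linarith
  have hRbound : |∑ j ∈ S, (g (ε*j) - g t - deriv g t * (ε*j - t)
      - deriv (deriv g) t / 2 * (ε*j - t)^2) * ψ (x - j)|
      ≤ (2*M+3) * ((B+1) * ((K+1) * (M+1)^3)) * ε^3 := by
    calc |∑ j ∈ S, (g (ε*j) - g t - deriv g t * (ε*j - t)
        - deriv (deriv g) t / 2 * (ε*j - t)^2) * ψ (x - j)|
        ≤ ∑ j ∈ S, |(g (ε*j) - g t - deriv g t * (ε*j - t)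
            - deriv (deriv g) t / 2 * (ε*j - t)^2) * ψ (x - j)| :=
          Finset.abs_sum_le_sum_abs _ _
      _ ≤ S.card • ((B+1) * ((K+1) * (M+1)^3) * ε^3) := Finset.sum_le_card_nsmul S _ _ hterm
      _ = (S.card : ℝ) * ((B+1) * ((K+1) * (M+1)^3) * ε^3) := nsmul_eq_mul _ _
      _ ≤ (2*M+3) * ((B+1) * ((K+1) * (M+1)^3) * ε^3) := by
          apply mul_le_mul_of_nonneg_right hcard
          have hM1' : (0:ℝ) ≤ M + 1 := by linarith
          positivity
      _ = (2*M+3) * ((B+1) * ((K+1) * (M+1)^3)) * ε^3 := by ring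
  rw [htsum, hkey]
  have hgoal : (ε^2 * deriv (deriv g) t + ∑ j ∈ S, (g (ε*j) - g t - deriv g t * (ε*j - t)
      - deriv (deriv g) t / 2 * (ε*j - t)^2) * ψ (x - j)) / ε^2 - deriv (deriv g) t
      = (∑ j ∈ S, (g (ε*j) - g t - deriv g t * (ε*j - t)
          - deriv (deriv g) t / 2 * (ε*j - t)^2) * ψ (x - j)) / ε^2 := by
    rw [add_div, mul_div_cancel_left₀ _ (pow_ne_zero 2 hε0.ne')]
    ring
  rw [hgoal, abs_div, abs_of_pos (pow_pos hε0 2), div_le_iff₀ (pow_pos hε0 2)]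
  calc |∑ j ∈ S, (g (ε*j) - g t - deriv g t * (ε*j - t)
      - deriv (deriv g) t / 2 * (ε*j - t)^2) * ψ (x - j)|
      ≤ (2*M+3) * ((B+1) * ((K+1) * (M+1)^3)) * ε^3 := hRbound
    _ = (2*M+3) * ((B+1) * ((K+1) * (M+1)^3)) * ε * ε^2 := by ring
end

section
/- Let φ: ℝ → ℝ be compactly supported, twice continuously differentiable, and satisfy Σ_{j∈ℤ} j^m φ(t − j) = t^m for all t ∈ ℝ and m = 0, 1, 2. Let g: ℝ → ℝ be three times differentiable with g, g', g'', g''' bounded on ℝ, and let K > 0. Then there exists C > 0 such that for all ε ∈ (0, 1], all t ∈ ℝ, and all δ ∈ ℝ with |δ| ≤ K ε, one has | ε^{-2} Σ_{j∈ℤ} g(εj) [ φ''((t + δ)/ε − j) − φ''(t/ε − j) ] | ≤ C ε. -/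
lemma sumDeriv (c : ℤ → ℝ) (J : Finset ℤ) (ψ : ℝ → ℝ) (hψ : Differentiable ℝ ψ) (s : ℝ) :
    HasDerivAt (fun u => ∑ j ∈ J, c j * ψ (u - (j:ℝ))) (∑ j ∈ J, c j * deriv ψ (s - (j:ℝ))) s := by
  apply HasDerivAt.fun_sum
  intro j _
  have h1 : HasDerivAt (fun u : ℝ => ψ (u - (j:ℝ))) (deriv ψ (s - (j:ℝ))) s := by
    have := ((hψ (s - (j:ℝ))).hasDerivAt).comp s ((hasDerivAt_id s).sub_const (j:ℝ))
    simpa [Function.comp_def] using this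
  simpa using h1.const_mul (c j)

lemma notmem_aux (L s₀ : ℝ) (hL : 0 ≤ L) (j : ℤ)
    (hj : j ∉ Finset.Icc ⌈s₀ - (L+1)⌉ ⌊s₀ + (L+1)⌋) (s : ℝ) (hs : |s - s₀| < 1) :
    L < |s - (j:ℝ)| := by
  rw [Finset.mem_Icc] at hj
  push_neg at hj
  rw [abs_sub_lt_iff] at hs
  by_cases hc : ⌈s₀ - (L+1)⌉ ≤ j
  · have h2 := hj hc
    have h3 : ¬ ((j:ℝ) ≤ s₀ + (L+1)) := by
      intro h; exact absurd (Int.le_floor.mpr h) (not_le.mpr h2)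
    push_neg at h3
    have : L < (j:ℝ) - s := by linarith [hs.1]
    calc L < (j:ℝ) - s := this
      _ = -(s - (j:ℝ)) := by ring
      _ ≤ |s - (j:ℝ)| := neg_le_abs _
  · have h3 : ¬ (s₀ - (L+1) ≤ (j:ℝ)) := by
      intro h; exact hc (Int.ceil_le.mpr h)
    push_neg at h3
    have : L < s - (j:ℝ) := by linarith [hs.2]
    exact this.trans_le (le_abs_self _)

lemma mem_aux (L s : ℝ) (j : ℤ) (hj : j ∈ Finset.Icc ⌈s - (L+1)⌉ ⌊s + (L+1)⌋) :
    |(j:ℝ) - s| ≤ L + 1 := by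
  rw [Finset.mem_Icc] at hj
  have h1 : s - (L+1) ≤ (j:ℝ) := le_trans (Int.le_ceil _) (by exact_mod_cast hj.1)
  have h2 : (j:ℝ) ≤ s + (L+1) := le_trans (by exact_mod_cast hj.2) (Int.floor_le _)
  rw [abs_le]; constructor <;> linarith

lemma card_aux (L s : ℝ) (hL : 0 ≤ L) :
    ((Finset.Icc ⌈s - (L+1)⌉ ⌊s + (L+1)⌋).card : ℝ) ≤ 2*L + 3 := by
  have h0 : ((Finset.Icc ⌈s - (L+1)⌉ ⌊s + (L+1)⌋).card : ℤ)
      = max (⌊s + (L+1)⌋ + 1 - ⌈s - (L+1)⌉) 0 := by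
    rw [Int.card_Icc, Int.toNat_eq_max]
  have h1 : ((Finset.Icc ⌈s - (L+1)⌉ ⌊s + (L+1)⌋).card : ℝ)
      = max ((⌊s + (L+1)⌋:ℝ) + 1 - (⌈s - (L+1)⌉:ℝ)) 0 := by
    have := congrArg (fun z : ℤ => (z : ℝ)) h0
    push_cast at this
    push_cast
    exact this
  rw [h1]
  apply max_le _ (by linarith)
  have h2 : (⌊s + (L+1)⌋:ℝ) ≤ s + (L+1) := Int.floor_le _
  have h3 : s - (L+1) ≤ (⌈s - (L+1)⌉:ℝ) := Int.le_ceil _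
  linarith

lemma moment2 (φ : ℝ → ℝ) (L : ℝ) (hL : 0 ≤ L)
    (hφd : Differentiable ℝ φ) (hφd2 : Differentiable ℝ (deriv φ))
    (hLφ : ∀ x : ℝ, L < |x| → φ x = 0)
    (hLφ2 : ∀ x : ℝ, L < |x| → deriv (deriv φ) x = 0)
    (c : ℤ → ℝ) (q q1 q2 : ℝ → ℝ)
    (h : ∀ s : ℝ, ∑' j : ℤ, c j * φ (s - (j:ℝ)) = q s)
    (hq1 : ∀ s : ℝ, HasDerivAt q (q1 s) s)
    (hq2 : ∀ s : ℝ, HasDerivAt q1 (q2 s) s) (s₀ : ℝ) :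
    ∑' j : ℤ, c j * deriv (deriv φ) (s₀ - (j:ℝ)) = q2 s₀ := by
  set J := Finset.Icc ⌈s₀ - (L+1)⌉ ⌊s₀ + (L+1)⌋ with hJdef
  have hvan : ∀ j ∉ J, ∀ s : ℝ, |s - s₀| < 1 → L < |s - (j:ℝ)| := by
    intro j hj s hs; exact notmem_aux L s₀ hL j hj s hs
  -- finite sum equals q on ball
  have hsum : ∀ s ∈ Metric.ball s₀ 1, (∑ j ∈ J, c j * φ (s - (j:ℝ))) = q s := by
    intro s hs
    rw [Metric.mem_ball, Real.dist_eq] at hs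
    rw [← h s]
    exact (tsum_eq_sum (fun j hj => by
      rw [hLφ _ (hvan j hj s hs), mul_zero])).symm
  have hball : Metric.ball s₀ 1 ∈ nhds s₀ := Metric.ball_mem_nhds s₀ one_pos
  -- first derivative identity on ball
  have step1 : ∀ s ∈ Metric.ball s₀ 1, (∑ j ∈ J, c j * deriv φ (s - (j:ℝ))) = q1 s := by
    intro s hs
    have hnb : Metric.ball s₀ 1 ∈ nhds s := (Metric.isOpen_ball).mem_nhds hs
    have heq : (fun u => ∑ j ∈ J, c j * φ (u - (j:ℝ))) =ᶠ[nhds s] q :=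
      Filter.eventuallyEq_of_mem hnb hsum
    have hd1 := (sumDeriv c J φ hφd s).deriv
    rw [← hd1, heq.deriv_eq, (hq1 s).deriv]
  -- second derivative at s₀
  have step2 : (∑ j ∈ J, c j * deriv (deriv φ) (s₀ - (j:ℝ))) = q2 s₀ := by
    have heq : (fun u => ∑ j ∈ J, c j * deriv φ (u - (j:ℝ))) =ᶠ[nhds s₀] q1 :=
      Filter.eventuallyEq_of_mem hball step1
    have hd2 := (sumDeriv c J (deriv φ) hφd2 s₀).deriv
    rw [← hd2, heq.deriv_eq, (hq2 s₀).deriv]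
  rw [← step2]
  exact tsum_eq_sum (fun j hj => by
    rw [hLφ2 _ (hvan j hj s₀ (by simp)), mul_zero])

theorem stmt5 (φ : ℝ → ℝ)
    (hsupp : HasCompactSupport φ)
    (hsmooth : ContDiff ℝ 2 φ)
    (hA1 : ∀ m : ℕ, m ≤ 2 → ∀ t : ℝ,
      ∑' j : ℤ, (j : ℝ) ^ m * φ (t - (j : ℝ)) = t ^ m)
    (g : ℝ → ℝ)
    (hg1 : Differentiable ℝ g)
    (hg2 : Differentiable ℝ (deriv g))
    (hg3 : Differentiable ℝ (deriv (deriv g)))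
    (B : ℝ)
    (hB : ∀ x : ℝ, |g x| ≤ B ∧ |deriv g x| ≤ B ∧ |deriv (deriv g) x| ≤ B ∧
      |deriv (deriv (deriv g)) x| ≤ B)
    (K : ℝ) (hK : 0 < K) :
    ∃ C : ℝ, 0 < C ∧ ∀ ε : ℝ, ε ∈ Set.Ioc (0:ℝ) 1 → ∀ t δ : ℝ, |δ| ≤ K * ε →
      |(∑' j : ℤ, g (ε * j) *
          (deriv (deriv φ) ((t + δ) / ε - (j : ℝ)) - deriv (deriv φ) (t / ε - (j : ℝ)))) / ε ^ 2|
        ≤ C * ε := by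
  -- basic smoothness facts
  have hφc1 : ContDiff ℝ 1 (deriv φ) := by
    have h2 : ContDiff ℝ ((1:ℕ)+1 : ℕ) φ := by exact_mod_cast hsmooth
    exact (contDiff_succ_iff_deriv.mp (by exact_mod_cast h2)).2.2
  have hφd : Differentiable ℝ φ := hsmooth.differentiable (by norm_num)
  have hφd2 : Differentiable ℝ (deriv φ) := hφc1.differentiable one_ne_zero
  have hφ2cont : Continuous (deriv (deriv φ)) := hφc1.continuous_deriv le_rfl
  -- compact support bound
  have hsupp2 : HasCompactSupport (deriv (deriv φ)) := hsupp.deriv.deriv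
  obtain ⟨L0, hL0⟩ := hsupp.isCompact.isBounded.subset_closedBall 0
  set L : ℝ := |L0| + 1 with hLdef
  have hL0' : 0 ≤ L := by positivity
  have hLφ : ∀ x : ℝ, L < |x| → φ x = 0 := by
    intro x hx
    apply image_eq_zero_of_notMem_tsupport
    intro hmem
    have := hL0 hmem
    rw [Metric.mem_closedBall, Real.dist_eq, sub_zero] at this
    have : |x| ≤ |L0| := this.trans (le_abs_self L0)
    linarith
  have htsub : tsupport (deriv (deriv φ)) ⊆ tsupport φ := by
    apply closure_minimal _ (isClosed_tsupport φ)
    intro x hx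
    have h1 : x ∈ tsupport (deriv φ) := support_deriv_subset hx
    exact (closure_minimal (support_deriv_subset) (isClosed_tsupport φ)) h1
  have hLφ2 : ∀ x : ℝ, L < |x| → deriv (deriv φ) x = 0 := by
    intro x hx
    apply image_eq_zero_of_notMem_tsupport
    intro hmem
    have := hL0 (htsub hmem)
    rw [Metric.mem_closedBall, Real.dist_eq, sub_zero] at this
    have : |x| ≤ |L0| := this.trans (le_abs_self L0)
    linarith
  -- bound on second derivative of φ
  obtain ⟨M2, hM2⟩ := hφ2cont.bounded_above_of_compact_support hsupp2
  have hM2' : ∀ x : ℝ, |deriv (deriv φ) x| ≤ M2 := fun x => hM2 x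
  have hM2nn : 0 ≤ M2 := (abs_nonneg _).trans (hM2' 0)
  have hBnn : 0 ≤ B := (abs_nonneg _).trans (hB 0).1
  -- moment identities for φ''
  have hS0 : ∀ s : ℝ, ∑' j : ℤ, (1:ℝ) * deriv (deriv φ) (s - (j:ℝ)) = 0 := by
    apply moment2 φ L hL0' hφd hφd2 hLφ hLφ2 (fun _ => (1:ℝ)) (fun _ => (1:ℝ)) (fun _ => (0:ℝ))
      (fun _ => (0:ℝ))
    · intro s; simpa using hA1 0 (by norm_num) s
    · intro s; exact hasDerivAt_const s 1
    · intro s; exact hasDerivAt_const s 0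
  have hS1 : ∀ s : ℝ, ∑' j : ℤ, (j:ℝ) * deriv (deriv φ) (s - (j:ℝ)) = 0 := by
    apply moment2 φ L hL0' hφd hφd2 hLφ hLφ2 (fun j => (j:ℝ)) (fun s => s) (fun _ => (1:ℝ))
      (fun _ => (0:ℝ))
    · intro s; simpa using hA1 1 (by norm_num) s
    · intro s; exact hasDerivAt_id s
    · intro s; exact hasDerivAt_const s 1
  have hS2 : ∀ s : ℝ, ∑' j : ℤ, (j:ℝ)^2 * deriv (deriv φ) (s - (j:ℝ)) = 2 := by
    apply moment2 φ L hL0' hφd hφd2 hLφ hLφ2 (fun j => ((j:ℝ))^2) (fun s => s^2)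
      (fun s => 2*s) (fun _ => (2:ℝ))
    · intro s; simpa using hA1 2 (by norm_num) s
    · intro s; simpa using hasDerivAt_pow 2 s
    · intro s; simpa using (hasDerivAt_id s).const_mul (2:ℝ)
  -- Lipschitz bound for g''
  have hlip : ∀ a b : ℝ, |deriv (deriv g) a - deriv (deriv g) b| ≤ B * |a - b| := by
    intro a b
    have := Convex.norm_image_sub_le_of_norm_deriv_le (f := deriv (deriv g)) (s := Set.univ)
      (fun x _ => (hg3 x)) (fun x _ => (hB x).2.2.2) convex_univ (Set.mem_univ b) (Set.mem_univ a)
    simpa [Real.norm_eq_abs] using this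
  -- Taylor remainder bound
  have htaylor : ∀ x h : ℝ,
      |g (x + h) - (g x + deriv g x * h + deriv (deriv g) x * (h^2/2))| ≤ B * |h|^3 := by
    intro x h
    set r : ℝ → ℝ := fun u => g (x + u) - (g x + deriv g x * u + deriv (deriv g) x * (u^2/2))
      with hrdef
    set r1 : ℝ → ℝ := fun u => deriv g (x + u) - deriv g x - deriv (deriv g) x * u with hr1def
    have hshift : ∀ (f : ℝ → ℝ), Differentiable ℝ f → ∀ u : ℝ,
        HasDerivAt (fun v : ℝ => f (x + v)) (deriv f (x + u)) u := by
      intro f hf u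
      have := ((hf (x + u)).hasDerivAt).comp u ((hasDerivAt_id u).const_add x)
      simpa [Function.comp_def] using this
    have hr : ∀ u : ℝ, HasDerivAt r (r1 u) u := by
      intro u
      have h1 := hshift g hg1 u
      have h2 : HasDerivAt (fun v : ℝ => g x + deriv g x * v + deriv (deriv g) x * (v^2/2))
          (deriv g x + deriv (deriv g) x * u) u := by
        have ha : HasDerivAt (fun v : ℝ => deriv g x * v) (deriv g x) u := by
          simpa using (hasDerivAt_id u).const_mul (deriv g x)
        have hb : HasDerivAt (fun v : ℝ => deriv (deriv g) x * (v^2/2)) (deriv (deriv g) x * u)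
            u := by
          have : HasDerivAt (fun v : ℝ => v^2/2) u u := by
            have := (hasDerivAt_pow 2 u).div_const 2
            simpa using this
          simpa [mul_comm] using this.const_mul (deriv (deriv g) x)
        simpa using ((hasDerivAt_const u (g x)).fun_add ha).fun_add hb
      have := h1.fun_sub h2
      exact this.congr_deriv (by simp only [r1]; ring)
    have hr1 : ∀ u : ℝ, HasDerivAt r1 (deriv (deriv g) (x + u) - deriv (deriv g) x) u := by
      intro u
      have h1 := hshift (deriv g) hg2 u
      have h2 : HasDerivAt (fun v : ℝ => deriv g x + deriv (deriv g) x * v)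
          (deriv (deriv g) x) u := by
        simpa using (hasDerivAt_const u (deriv g x)).fun_add
          (by simpa using (hasDerivAt_id u).const_mul (deriv (deriv g) x))
      have := h1.fun_sub h2
      exact this.congr_of_eventuallyEq (Filter.Eventually.of_forall fun v => by simp only [r1]; ring)
    set I : Set ℝ := Set.Icc (min 0 h) (max 0 h) with hIdef
    have h0I : (0:ℝ) ∈ I := ⟨min_le_left _ _, le_max_left _ _⟩
    have hhI : h ∈ I := ⟨min_le_right _ _, le_max_right _ _⟩
    have habs : ∀ u ∈ I, |u| ≤ |h| := by
      intro u hu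
      rw [abs_le]
      constructor
      · calc -|h| ≤ min 0 h := le_min (neg_nonpos.mpr (abs_nonneg h)) (neg_abs_le h)
          _ ≤ u := hu.1
      · calc u ≤ max 0 h := hu.2
          _ ≤ |h| := max_le (abs_nonneg h) (le_abs_self h)
    -- bound r1 on I
    have hr1b : ∀ u ∈ I, |r1 u| ≤ B * |h| * |u| := by
      intro u hu
      have hbd : ∀ v ∈ I, ‖deriv r1 v‖ ≤ B * |h| := by
        intro v hv
        rw [(hr1 v).deriv, Real.norm_eq_abs]
        calc |deriv (deriv g) (x + v) - deriv (deriv g) x| ≤ B * |x + v - x| := hlip _ _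
          _ = B * |v| := by ring_nf
          _ ≤ B * |h| := by
              exact mul_le_mul_of_nonneg_left (habs v hv) hBnn
      have := Convex.norm_image_sub_le_of_norm_deriv_le (f := r1) (s := I)
        (fun v _ => (hr1 v).differentiableAt) hbd (convex_Icc _ _) h0I hu
      have hr10 : r1 0 = 0 := by simp [r1]
      simpa [Real.norm_eq_abs, hr10] using this
    -- bound r on I
    have hrb : |r h - r 0| ≤ B * |h|^2 * |h| := by
      have hbd : ∀ v ∈ I, ‖deriv r v‖ ≤ B * |h|^2 := by
        intro v hv
        rw [(hr v).deriv, Real.norm_eq_abs]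
        calc |r1 v| ≤ B * |h| * |v| := hr1b v hv
          _ ≤ B * |h| * |h| := by
              exact mul_le_mul_of_nonneg_left (habs v hv) (by positivity)
          _ = B * |h|^2 := by ring
      have := Convex.norm_image_sub_le_of_norm_deriv_le (f := r) (s := I)
        (fun v _ => (hr v).differentiableAt) hbd (convex_Icc _ _) h0I hhI
      simpa [Real.norm_eq_abs] using this
    have hr0 : r 0 = 0 := by simp [r]
    have : |r h| ≤ B * |h|^3 := by
      rw [hr0, sub_zero] at hrb
      calc |r h| ≤ B * |h|^2 * |h| := hrb
        _ = B * |h|^3 := by ring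
    simpa [r] using this
  -- core approximation estimate
  have hcore : ∀ ε : ℝ, 0 < ε → ε ≤ 1 → ∀ s : ℝ,
      |(∑' j : ℤ, g (ε * (j:ℝ)) * deriv (deriv φ) (s - (j:ℝ)))
        - ε^2 * deriv (deriv g) (ε * s)| ≤ (B * (L+1)^3 * ((2*L+3) * M2)) * ε^3 := by
    intro ε hε hε1 s
    set J := Finset.Icc ⌈s - (L+1)⌉ ⌊s + (L+1)⌋ with hJdef
    have hvan : ∀ j ∉ J, deriv (deriv φ) (s - (j:ℝ)) = 0 := fun j hj =>
      hLφ2 _ (notmem_aux L s hL0' j hj s (by simp))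
    have htsum : (∑' j : ℤ, g (ε * (j:ℝ)) * deriv (deriv φ) (s - (j:ℝ)))
        = ∑ j ∈ J, g (ε * (j:ℝ)) * deriv (deriv φ) (s - (j:ℝ)) :=
      tsum_eq_sum (fun j hj => by rw [hvan j hj, mul_zero])
    have hS0J : (∑ j ∈ J, deriv (deriv φ) (s - (j:ℝ))) = 0 := by
      have h' : (∑' j : ℤ, deriv (deriv φ) (s - (j:ℝ))) = 0 := by simpa using hS0 s
      rw [← tsum_eq_sum (L := SummationFilter.unconditional ℤ) (fun j hj => hvan j hj)]
      exact h'
    have hS1J : (∑ j ∈ J, (j:ℝ) * deriv (deriv φ) (s - (j:ℝ))) = 0 := by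
      rw [← tsum_eq_sum (L := SummationFilter.unconditional ℤ) (fun j hj => by rw [hvan j hj, mul_zero])]
      exact hS1 s
    have hS2J : (∑ j ∈ J, (j:ℝ)^2 * deriv (deriv φ) (s - (j:ℝ))) = 2 := by
      rw [← tsum_eq_sum (L := SummationFilter.unconditional ℤ) (fun j hj => by rw [hvan j hj, mul_zero])]
      exact hS2 s
    set a := g (ε * s) with hadef
    set b := deriv g (ε * s) with hbdef
    set cc := deriv (deriv g) (ε * s) with hccdef
    have hpoly : (∑ j ∈ J, (a + b*(ε*((j:ℝ)-s)) + cc*((ε*((j:ℝ)-s))^2/2))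
        * deriv (deriv φ) (s - (j:ℝ))) = ε^2 * cc := by
      have e : ∀ j ∈ J, (a + b*(ε*((j:ℝ)-s)) + cc*((ε*((j:ℝ)-s))^2/2))
          * deriv (deriv φ) (s - (j:ℝ))
          = (a - b*(ε*s) + cc*(ε^2*s^2/2)) * deriv (deriv φ) (s - (j:ℝ))
            + (b*ε - cc*(ε^2*s)) * ((j:ℝ) * deriv (deriv φ) (s - (j:ℝ)))
            + (cc*(ε^2/2)) * ((j:ℝ)^2 * deriv (deriv φ) (s - (j:ℝ))) := by
        intro j _; ring
      rw [Finset.sum_congr rfl e, Finset.sum_add_distrib, Finset.sum_add_distrib]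
      simp only [← Finset.mul_sum]
      rw [hS0J, hS1J, hS2J]
      ring
    have hsplit : (∑ j ∈ J, g (ε * (j:ℝ)) * deriv (deriv φ) (s - (j:ℝ))) - ε^2 * cc
        = ∑ j ∈ J, (g (ε * (j:ℝ)) - (a + b*(ε*((j:ℝ)-s)) + cc*((ε*((j:ℝ)-s))^2/2)))
            * deriv (deriv φ) (s - (j:ℝ)) := by
      rw [← hpoly, ← Finset.sum_sub_distrib]
      apply Finset.sum_congr rfl
      intro j _; ring
    have termbound : ∀ j ∈ J,
        |(g (ε * (j:ℝ)) - (a + b*(ε*((j:ℝ)-s)) + cc*((ε*((j:ℝ)-s))^2/2)))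
          * deriv (deriv φ) (s - (j:ℝ))| ≤ B * (L+1)^3 * ε^3 * M2 := by
      intro j hj
      have hxh : ε * s + ε * ((j:ℝ) - s) = ε * (j:ℝ) := by ring
      have ht := htaylor (ε * s) (ε * ((j:ℝ) - s))
      rw [hxh] at ht
      have habsh : |ε * ((j:ℝ) - s)| ≤ ε * (L+1) := by
        rw [abs_mul, abs_of_pos hε]
        exact mul_le_mul_of_nonneg_left (mem_aux L s j hj) hε.le
      have hcube : |ε * ((j:ℝ) - s)|^3 ≤ (ε * (L+1))^3 :=
        pow_le_pow_left₀ (abs_nonneg _) habsh 3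
      rw [abs_mul]
      calc |g (ε * (j:ℝ)) - (a + b*(ε*((j:ℝ)-s)) + cc*((ε*((j:ℝ)-s))^2/2))|
            * |deriv (deriv φ) (s - (j:ℝ))|
          ≤ (B * |ε * ((j:ℝ) - s)|^3) * M2 := by
            apply mul_le_mul ht (hM2' _) (abs_nonneg _)
            positivity
        _ ≤ (B * (ε * (L+1))^3) * M2 := by
            apply mul_le_mul_of_nonneg_right _ hM2nn
            exact mul_le_mul_of_nonneg_left hcube hBnn
        _ = B * (L+1)^3 * ε^3 * M2 := by ring
    calc |(∑' j : ℤ, g (ε * (j:ℝ)) * deriv (deriv φ) (s - (j:ℝ))) - ε^2 * cc|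
        = |∑ j ∈ J, (g (ε * (j:ℝ)) - (a + b*(ε*((j:ℝ)-s)) + cc*((ε*((j:ℝ)-s))^2/2)))
            * deriv (deriv φ) (s - (j:ℝ))| := by rw [htsum, hsplit]
      _ ≤ ∑ j ∈ J, |(g (ε * (j:ℝ)) - (a + b*(ε*((j:ℝ)-s)) + cc*((ε*((j:ℝ)-s))^2/2)))
            * deriv (deriv φ) (s - (j:ℝ))| := Finset.abs_sum_le_sum_abs _ _
      _ ≤ J.card • (B * (L+1)^3 * ε^3 * M2) := Finset.sum_le_card_nsmul _ _ _ termbound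
      _ = (J.card : ℝ) * (B * (L+1)^3 * ε^3 * M2) := by rw [nsmul_eq_mul]
      _ ≤ (2*L+3) * (B * (L+1)^3 * ε^3 * M2) := by
          apply mul_le_mul_of_nonneg_right (card_aux L s hL0')
          positivity
      _ = (B * (L+1)^3 * ((2*L+3) * M2)) * ε^3 := by ring
  -- final assembly
  set C₁ : ℝ := B * (L+1)^3 * ((2*L+3) * M2) with hC1def
  have hC1nn : 0 ≤ C₁ := by positivity
  refine ⟨2*C₁ + B*K + 1, by nlinarith [mul_nonneg hBnn hK.le], ?_⟩
  intro ε hε t δ hδ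
  obtain ⟨hε0, hε1⟩ := hε
  have hsummable : ∀ u : ℝ, Summable (fun j : ℤ => g (ε * (j:ℝ)) * deriv (deriv φ) (u - (j:ℝ))) := by
    intro u
    apply summable_of_ne_finset_zero (s := Finset.Icc ⌈u - (L+1)⌉ ⌊u + (L+1)⌋)
    intro j hj
    rw [hLφ2 _ (notmem_aux L u hL0' j hj u (by simp)), mul_zero]
  have hsplit2 : (∑' j : ℤ, g (ε * (j:ℝ)) *
        (deriv (deriv φ) ((t + δ) / ε - (j:ℝ)) - deriv (deriv φ) (t / ε - (j:ℝ))))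
      = (∑' j : ℤ, g (ε * (j:ℝ)) * deriv (deriv φ) ((t + δ) / ε - (j:ℝ)))
        - (∑' j : ℤ, g (ε * (j:ℝ)) * deriv (deriv φ) (t / ε - (j:ℝ))) := by
    simp_rw [mul_sub]
    exact Summable.tsum_sub (hsummable _) (hsummable _)
  have h1 := hcore ε hε0 hε1 ((t + δ) / ε)
  have h2 := hcore ε hε0 hε1 (t / ε)
  have he1 : ε * ((t + δ) / ε) = t + δ := by field_simp
  have he2 : ε * (t / ε) = t := by field_simp
  rw [he1] at h1
  rw [he2] at h2
  have h3 : |deriv (deriv g) (t + δ) - deriv (deriv g) t| ≤ B * (K * ε) := by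
    calc |deriv (deriv g) (t + δ) - deriv (deriv g) t| ≤ B * |t + δ - t| := hlip _ _
      _ = B * |δ| := by ring_nf
      _ ≤ B * (K * ε) := mul_le_mul_of_nonneg_left hδ hBnn
  rw [hsplit2, abs_div, abs_of_nonneg (by positivity : (0:ℝ) ≤ ε^2),
    div_le_iff₀ (by positivity : (0:ℝ) < ε^2)]
  set S₁ := ∑' j : ℤ, g (ε * (j:ℝ)) * deriv (deriv φ) ((t + δ) / ε - (j:ℝ)) with hS₁def
  set S₂ := ∑' j : ℤ, g (ε * (j:ℝ)) * deriv (deriv φ) (t / ε - (j:ℝ)) with hS₂def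
  have e : S₁ - S₂ = (S₁ - ε^2 * deriv (deriv g) (t + δ)) - (S₂ - ε^2 * deriv (deriv g) t)
      + ε^2 * (deriv (deriv g) (t + δ) - deriv (deriv g) t) := by ring
  have hb : |S₁ - S₂| ≤ C₁*ε^3 + C₁*ε^3 + ε^2 * (B * (K * ε)) := by
    rw [e]
    refine (abs_add_le _ _).trans (add_le_add ?_ ?_)
    · exact (abs_sub _ _).trans (add_le_add h1 h2)
    · rw [abs_mul, abs_of_nonneg (by positivity : (0:ℝ) ≤ ε^2)]
      exact mul_le_mul_of_nonneg_left h3 (by positivity)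
  calc |S₁ - S₂| ≤ C₁*ε^3 + C₁*ε^3 + ε^2 * (B * (K * ε)) := hb
    _ = (2*C₁ + B*K) * ε^3 := by ring
    _ ≤ (2*C₁ + B*K + 1) * ε * ε^2 := by nlinarith [pow_pos hε0 3]
end

section
/- Let a < b and let f be a real-valued, twice continuously differentiable function on [a, b] such that f''(t) ≠ 0 for all t ∈ [a, b] and there exists n ∈ ℤ with n < f'(a) < n + 1 and n < f'(b) < n + 1. Then for every nonzero integer M, the Weyl sums J(ε) := ε · Σ_{i ∈ ℤ, εi ∈ [a, b]} exp(2πi M f(εi)/ε) tend to 0 as ε → 0⁺. -/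
open MeasureTheory Filter


noncomputable def EE (x : ℝ) : ℂ := Complex.exp (2 * Real.pi * Complex.I * x)

lemma EE_def (x : ℝ) : EE x = Complex.exp (2 * Real.pi * Complex.I * x) := rfl

lemma EE_norm (x : ℝ) : ‖EE x‖ = 1 := by
  simp [EE, Complex.norm_exp]

lemma EE_add (x y : ℝ) : EE (x + y) = EE x * EE y := by
  rw [EE, EE, EE, ← Complex.exp_add]; congr 1; push_cast; ring

lemma EE_int (m : ℤ) : EE m = 1 := by
  have := Complex.exp_int_mul_two_pi_mul_I m
  simpa [EE, mul_comm, mul_assoc, mul_left_comm] using this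

lemma EE_neg (x : ℝ) : EE (-x) = starRingEnd ℂ (EE x) := by
  rw [EE, EE, ← Complex.exp_conj]
  congr 1
  simp [map_mul, Complex.conj_I, Complex.conj_ofReal, map_ofNat]

lemma EE_sub_one (t : ℝ) :
    EE t - 1 = -2 * Real.sin (Real.pi * t) ^ 2 +
      2 * Real.sin (Real.pi * t) * Real.cos (Real.pi * t) * Complex.I := by
  have h : (2 * Real.pi * Complex.I * t) = ((2 * (Real.pi * t) : ℝ) : ℂ) * Complex.I := by
    push_cast; ring
  rw [EE, h, Complex.exp_mul_I, ← Complex.ofReal_cos, ← Complex.ofReal_sin,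
    Real.cos_two_mul, Real.sin_two_mul]
  set s := Real.sin (Real.pi * t)
  set c := Real.cos (Real.pi * t)
  have hs' : (s:ℂ)^2 + (c:ℂ)^2 = 1 := by
    exact_mod_cast congrArg (fun x : ℝ => (x : ℂ)) (Real.sin_sq_add_cos_sq (Real.pi * t))
  push_cast
  linear_combination (2:ℂ) * hs'

private lemma aux_inv (s c : ℂ) (hs : s ≠ 0) (h : s^2+c^2=1) :
    (-2*s^2 + 2*s*c*Complex.I) * (-(1/2 : ℂ) - (c/s)/2*Complex.I) = 1 := by
  have hI := Complex.I_sq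
  have hcs : c / s * s = c := div_mul_cancel₀ c hs
  linear_combination h + (s*Complex.I - c*Complex.I^2)*hcs - c^2*hI

lemma EE_inv_formula {t : ℝ} (hs : Real.sin (Real.pi * t) ≠ 0) :
    (EE t - 1)⁻¹ = -(1/2 : ℂ) -
      (Real.cos (Real.pi * t) / Real.sin (Real.pi * t) : ℝ) / 2 * Complex.I := by
  have hs' : ((Real.sin (Real.pi * t) : ℝ):ℂ) ≠ 0 := by exact_mod_cast hs
  have hsc : ((Real.sin (Real.pi * t):ℝ):ℂ)^2 + ((Real.cos (Real.pi * t):ℝ):ℂ)^2 = 1 := by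
    exact_mod_cast congrArg (fun x : ℝ => (x : ℂ)) (Real.sin_sq_add_cos_sq (Real.pi * t))
  have h1 : (EE t - 1) * (-(1/2 : ℂ) -
      ((Real.cos (Real.pi * t) / Real.sin (Real.pi * t) : ℝ) : ℂ) / 2 * Complex.I) = 1 := by
    rw [EE_sub_one, Complex.ofReal_div]
    exact aux_inv _ _ hs' hsc
  exact inv_eq_of_mul_eq_one_right h1

lemma EE_sub_one_ne {t : ℝ} (hs : Real.sin (Real.pi * t) ≠ 0) : EE t - 1 ≠ 0 := by
  have hs' : ((Real.sin (Real.pi * t) : ℝ):ℂ) ≠ 0 := by exact_mod_cast hs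
  have hsc : ((Real.sin (Real.pi * t):ℝ):ℂ)^2 + ((Real.cos (Real.pi * t):ℝ):ℂ)^2 = 1 := by
    exact_mod_cast congrArg (fun x : ℝ => (x : ℂ)) (Real.sin_sq_add_cos_sq (Real.pi * t))
  have h1 : (EE t - 1) * (-(1/2 : ℂ) -
      ((Real.cos (Real.pi * t) / Real.sin (Real.pi * t) : ℝ) : ℂ) / 2 * Complex.I) = 1 := by
    rw [EE_sub_one, Complex.ofReal_div]
    exact aux_inv _ _ hs' hsc
  exact left_ne_zero_of_mul_eq_one h1


lemma sin_window {δ t : ℝ} (hδ : 0 < δ) (hδ2 : δ ≤ 1/2) (h1 : δ ≤ t) (h2 : t ≤ 1 - δ) :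
    2*δ ≤ Real.sin (Real.pi * t) := by
  have hπ := Real.pi_pos
  have hmono := Real.strictMonoOn_sin.monotoneOn
  have key : Real.sin (Real.pi * δ) ≤ Real.sin (Real.pi * t) := by
    rcases le_or_gt t (1/2) with h | h
    · exact hmono (by constructor <;> nlinarith) (by constructor <;> nlinarith) (by nlinarith)
    · rw [show Real.pi * t = Real.pi - Real.pi * (1 - t) by ring, Real.sin_pi_sub]
      exact hmono (by constructor <;> nlinarith) (by constructor <;> nlinarith) (by nlinarith)
  have h3 : 2 / Real.pi * (Real.pi * δ) ≤ Real.sin (Real.pi * δ) :=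
    Real.mul_le_sin (by positivity) (by nlinarith)
  have h4 : 2 / Real.pi * (Real.pi * δ) = 2 * δ := by field_simp
  linarith [h4 ▸ h3]

lemma cot_anti {x y : ℝ} (hx : 0 < x) (hxy : x ≤ y) (hy : y < Real.pi) :
    Real.cos y / Real.sin y ≤ Real.cos x / Real.sin x := by
  have hsx : 0 < Real.sin x := Real.sin_pos_of_pos_of_lt_pi hx (lt_of_le_of_lt hxy hy)
  have hsy : 0 < Real.sin y := Real.sin_pos_of_pos_of_lt_pi (lt_of_lt_of_le hx hxy) hy
  rw [div_le_div_iff₀ hsy hsx]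
  have h := Real.sin_nonneg_of_nonneg_of_le_pi (x := y - x) (by linarith) (by linarith)
  rw [Real.sin_sub] at h
  nlinarith

lemma uRe {t : ℝ} (hs : Real.sin (Real.pi*t) ≠ 0) : ((EE t - 1)⁻¹).re = -(1/2) := by
  rw [EE_inv_formula hs]
  set r : ℝ := Real.cos (Real.pi*t) / Real.sin (Real.pi*t) with hr
  simp

lemma uIm {t : ℝ} (hs : Real.sin (Real.pi*t) ≠ 0) :
    ((EE t - 1)⁻¹).im = -(Real.cos (Real.pi*t) / Real.sin (Real.pi*t))/2 := by
  rw [EE_inv_formula hs]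
  set r : ℝ := Real.cos (Real.pi*t) / Real.sin (Real.pi*t) with hr
  simp
  ring

lemma uIm_bound {δ t : ℝ} (hδ : 0 < δ) (h : 2*δ ≤ Real.sin (Real.pi*t)) :
    |((EE t - 1)⁻¹).im| ≤ 1/(4*δ) := by
  have hs : 0 < Real.sin (Real.pi*t) := by linarith
  rw [uIm hs.ne']
  have h1 : |Real.cos (Real.pi*t)| ≤ 1 := Real.abs_cos_le_one _
  have h2 : |(-(Real.cos (Real.pi*t)/Real.sin (Real.pi*t))/2)|
      = |Real.cos (Real.pi*t)|/(Real.sin (Real.pi*t)*2) := by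
    rw [abs_div, abs_neg, abs_div, abs_of_pos hs]
    norm_num
    ring
  rw [h2]
  exact div_le_div₀ (by norm_num) h1 (by positivity) (by linarith)

lemma uNorm_bound {δ t : ℝ} (hδ : 0 < δ) (h : 2*δ ≤ Real.sin (Real.pi*t)) :
    ‖(EE t - 1)⁻¹‖ ≤ 1/2 + 1/(4*δ) := by
  have hs : 0 < Real.sin (Real.pi*t) := by linarith
  refine le_trans (Complex.norm_le_abs_re_add_abs_im _) ?_
  rw [uRe hs.ne']
  have := uIm_bound hδ h
  rw [abs_neg, abs_of_pos (by norm_num : (0:ℝ) < 1/2)]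
  linarith

lemma abel_identity (w u : ℕ → ℂ) (n : ℕ) :
    ∑ k ∈ Finset.range (n+1), (w (k+1) - w k) * u k
      = w (n+1) * u n - w 0 * u 0 - ∑ k ∈ Finset.range n, w (k+1) * (u (k+1) - u k) := by
  induction n with
  | zero => simp; ring
  | succ n ih => rw [Finset.sum_range_succ, ih, Finset.sum_range_succ]; ring

lemma KL1 (g : ℤ → ℝ) (A B m : ℤ) (δ : ℝ) (hδ : 0 < δ) (hδ2 : δ ≤ 1/2)
    (hwin : ∀ i : ℤ, A ≤ i → i ≤ B - 1 →
      δ ≤ g (i+1) - g i - m ∧ g (i+1) - g i - m ≤ 1 - δ)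
    (hmono : ∀ i j : ℤ, A ≤ i → i ≤ j → j ≤ B - 1 → g (i+1) - g i ≤ g (j+1) - g j) :
    ‖∑ i ∈ Finset.Icc A B, EE (g i)‖ ≤ 2 + 1/δ := by
  rcases lt_or_ge B A with hBA | hAB
  · rw [Finset.Icc_eq_empty (by omega)]
    simp
    positivity
  have hsplit : Finset.Icc A B = insert B (Finset.Icc A (B-1)) := by
    ext i; simp only [Finset.mem_Icc, Finset.mem_insert]; omega
  have hBnot : B ∉ Finset.Icc A (B-1) := by simp [Finset.mem_Icc]
  rw [hsplit, Finset.sum_insert hBnot]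
  refine le_trans (norm_add_le _ _) ?_
  rw [EE_norm]
  have main : ‖∑ i ∈ Finset.Icc A (B-1), EE (g i)‖ ≤ 1 + 1/δ := by
    obtain ⟨n, hn⟩ : ∃ n : ℕ, (n:ℤ) = B - A := ⟨(B - A).toNat, by omega⟩
    have hmap : Finset.Icc A (B-1)
        = (Finset.range n).map ⟨fun k : ℕ => A + (k:ℤ), show Function.Injective (fun k : ℕ => A + (k:ℤ)) from fun x y h => by simpa using h⟩ := by
      ext i
      simp only [Finset.mem_Icc, Finset.mem_map, Finset.mem_range, Function.Embedding.coeFn_mk]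
      constructor
      · intro hi; exact ⟨(i - A).toNat, by omega, by omega⟩
      · rintro ⟨k, hk, rfl⟩; omega
    rw [hmap, Finset.sum_map]
    simp only [Function.Embedding.coeFn_mk]
    -- definitions
    set w : ℕ → ℂ := fun k => EE (g (A + (k:ℤ))) with hw_def
    set t : ℕ → ℝ := fun k => g (A + (k:ℤ) + 1) - g (A + (k:ℤ)) - m with ht_def
    set u : ℕ → ℂ := fun k => (EE (t k) - 1)⁻¹ with hu_def
    cases n with
    | zero =>
      simp only [Finset.range_zero, Finset.sum_empty, norm_zero]
      positivity
    | succ nn => ?_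
    -- window facts
    have htwin : ∀ k : ℕ, k < nn + 1 → δ ≤ t k ∧ t k ≤ 1 - δ := by
      intro k hk
      have := hwin (A + (k:ℤ)) (by omega) (by omega)
      simpa [ht_def] using this
    have hsin : ∀ k : ℕ, k < nn + 1 → 2*δ ≤ Real.sin (Real.pi * t k) := by
      intro k hk
      obtain ⟨h1, h2⟩ := htwin k hk
      exact sin_window hδ hδ2 h1 h2
    have hsne : ∀ k : ℕ, k < nn + 1 → Real.sin (Real.pi * t k) ≠ 0 := by
      intro k hk; have := hsin k hk; exact ne_of_gt (by linarith)
    -- basic identity  w k = (w (k+1) - w k) * u k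
    have hwid : ∀ k : ℕ, k < nn + 1 → w k = (w (k+1) - w k) * u k := by
      intro k hk
      have h1 : w (k+1) = w k * EE (t k) := by
        have harg : g (A + ((k:ℕ)+1:ℕ)) = g (A + (k:ℤ)) + t k + m := by
          have : (A + ((k:ℕ)+1:ℕ) : ℤ) = A + (k:ℤ) + 1 := by push_cast; ring
          rw [this]; simp [ht_def]; ring
        show EE (g (A + ((k:ℕ)+1:ℕ))) = _
        rw [harg, EE_add, EE_add, EE_int, mul_one]
      have hne : EE (t k) - 1 ≠ 0 := EE_sub_one_ne (hsne k hk)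
      calc w k = w k * ((EE (t k) - 1) * (EE (t k) - 1)⁻¹) := by
                  rw [mul_inv_cancel₀ hne, mul_one]
        _ = (w (k+1) - w k) * u k := by rw [h1, hu_def]; ring
    have hsum : ∑ k ∈ Finset.range (nn+1), w k
        = ∑ k ∈ Finset.range (nn+1), (w (k+1) - w k) * u k :=
      Finset.sum_congr rfl (fun k hk => hwid k (Finset.mem_range.mp hk))
    rw [hsum, abel_identity]
    -- norms
    have hwnorm : ∀ k : ℕ, ‖w k‖ = 1 := fun k => EE_norm _
    have hub : ∀ k : ℕ, k < nn + 1 → ‖u k‖ ≤ 1/2 + 1/(4*δ) := by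
      intro k hk
      exact uNorm_bound hδ (hsin k hk)
    have himb : ∀ k : ℕ, k < nn + 1 → |(u k).im| ≤ 1/(4*δ) := by
      intro k hk
      exact uIm_bound hδ (hsin k hk)
    have himmono : ∀ k : ℕ, k + 1 < nn + 1 → (u k).im ≤ (u (k+1)).im := by
      intro k hk
      have h1 := htwin k (by omega)
      have h2 := htwin (k+1) hk
      have htle : t k ≤ t (k+1) := by
        have hm := hmono (A + (k:ℤ)) (A + (k:ℤ) + 1) (by omega) (by omega) (by omega)
        have e1 : (A + (((k:ℕ)+1:ℕ)) : ℤ) = A + (k:ℤ) + 1 := by push_cast; ring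
        simp only [ht_def, e1]
        linarith [hm]
      rw [uIm (hsne k (by omega)), uIm (hsne (k+1) hk)]
      have hπ := Real.pi_pos
      have hcot : Real.cos (Real.pi * t (k+1)) / Real.sin (Real.pi * t (k+1))
          ≤ Real.cos (Real.pi * t k) / Real.sin (Real.pi * t k) := by
        apply cot_anti
        · nlinarith [h1.1]
        · nlinarith
        · nlinarith [h2.2, hδ]
      linarith
    -- telescoping bound
    have hdiff : ∀ k : ℕ, k < nn → ‖w (k+1) * (u (k+1) - u k)‖ ≤ (u (k+1)).im - (u k).im := by
      intro k hk
      rw [norm_mul, hwnorm, one_mul]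
      have hre : (u (k+1) - u k).re = 0 := by
        rw [Complex.sub_re, uRe (hsne (k+1) (by omega)), uRe (hsne k (by omega))]
        ring
      refine le_trans (Complex.norm_le_abs_re_add_abs_im _) ?_
      rw [hre]
      simp only [abs_zero, zero_add, Complex.sub_im]
      rw [abs_of_nonneg (by linarith [himmono k (by omega)])]
    have htel : ∑ k ∈ Finset.range nn, ‖w (k+1) * (u (k+1) - u k)‖ ≤ 1/(2*δ) := by
      calc ∑ k ∈ Finset.range nn, ‖w (k+1) * (u (k+1) - u k)‖
          ≤ ∑ k ∈ Finset.range nn, ((u (k+1)).im - (u k).im) :=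
            Finset.sum_le_sum (fun k hk => hdiff k (Finset.mem_range.mp hk))
        _ = (u nn).im - (u 0).im := by
            rw [Finset.sum_range_sub (fun k => (u k).im)]
        _ ≤ 1/(2*δ) := by
            have h1 := himb nn (by omega)
            have h2 := himb 0 (by omega)
            have := abs_le.mp h1
            have := abs_le.mp h2
            rw [show 1/(2*δ) = 1/(4*δ) + 1/(4*δ) by ring]
            linarith [(abs_le.mp h1).1, (abs_le.mp h1).2, (abs_le.mp h2).1, (abs_le.mp h2).2]
    calc ‖w (nn+1) * u nn - w 0 * u 0 - ∑ k ∈ Finset.range nn, w (k+1) * (u (k+1) - u k)‖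
        ≤ ‖w (nn+1) * u nn - w 0 * u 0‖ + ‖∑ k ∈ Finset.range nn, w (k+1) * (u (k+1) - u k)‖ :=
          norm_sub_le _ _
      _ ≤ ‖w (nn+1) * u nn‖ + ‖w 0 * u 0‖ + ∑ k ∈ Finset.range nn, ‖w (k+1) * (u (k+1) - u k)‖ := by
          have := norm_sub_le (w (nn+1) * u nn) (w 0 * u 0)
          have := norm_sum_le (Finset.range nn) (fun k => w (k+1) * (u (k+1) - u k))
          linarith
      _ ≤ (1/2 + 1/(4*δ)) + (1/2 + 1/(4*δ)) + 1/(2*δ) := by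
          rw [norm_mul, norm_mul, hwnorm, hwnorm, one_mul, one_mul]
          have h1 := hub nn (by omega)
          have h2 := hub 0 (by omega)
          linarith [htel]
      _ = 1 + 1/δ := by ring
  linarith


lemma toNat_cast_real {a : ℤ} (h : 0 ≤ a) : ((a.toNat : ℕ) : ℝ) = (a : ℝ) := by
  exact_mod_cast congrArg (fun z : ℤ => (z:ℝ)) (Int.toNat_of_nonneg h)

lemma card_small (s : Finset ℤ) (L : ℝ) (hL : 0 ≤ L)
    (h : ∀ i ∈ s, ∀ j ∈ s, (j - i : ℝ) ≤ L) : (s.card : ℝ) ≤ L + 1 := by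
  rcases s.eq_empty_or_nonempty with rfl | hne
  · simp; linarith
  · have hsub : s ⊆ Finset.Icc (s.min' hne) (s.max' hne) :=
      fun i hi => Finset.mem_Icc.mpr ⟨s.min'_le i hi, s.le_max' i hi⟩
    have hcard := Finset.card_le_card hsub
    have hmm : s.min' hne ≤ s.max' hne := s.min'_le _ (s.max'_mem hne)
    have hval : ((s.max' hne : ℝ)) - ((s.min' hne : ℝ)) ≤ L :=
      h _ (s.min'_mem hne) _ (s.max'_mem hne)
    calc (s.card : ℝ) ≤ ((Finset.Icc (s.min' hne) (s.max' hne)).card : ℝ) := by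
          exact_mod_cast hcard
      _ = (((s.max' hne) + 1 - s.min' hne).toNat : ℝ) := by rw [Int.card_Icc]
      _ = ((s.max' hne : ℝ) + 1 - (s.min' hne : ℝ)) := by
          have h0 : (0:ℤ) ≤ s.max' hne + 1 - s.min' hne := by omega
          rw [toNat_cast_real h0]
          push_cast
          ring
      _ ≤ L + 1 := by linarith

lemma norm_sum_le_card (s : Finset ℤ) (g : ℤ → ℝ) :
    ‖∑ i ∈ s, EE (g i)‖ ≤ (s.card : ℝ) := by
  have he : (∑ i ∈ s, ‖EE (g i)‖) = (s.card : ℝ) := by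
    rw [Finset.sum_congr rfl (fun i _ => EE_norm (g i))]
    simp
  exact le_trans (norm_sum_le _ _) (le_of_eq he)

lemma KLmulti (g : ℤ → ℝ) (A B : ℤ) (σ δ P Q : ℝ) (hσ : 0 < σ) (hδ : 0 < δ) (hδ2 : δ ≤ 1/2)
    (hPQ : P ≤ Q)
    (hstep : ∀ i : ℤ, A ≤ i → i ≤ B - 2 → σ ≤ (g (i+2) - g (i+1)) - (g (i+1) - g i))
    (hrange : ∀ i : ℤ, A ≤ i → i ≤ B - 1 → P ≤ g (i+1) - g i ∧ g (i+1) - g i ≤ Q) :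
    ‖∑ i ∈ Finset.Icc A B, EE (g i)‖
      ≤ 1 + (Q - P + 2) * (2*(δ/σ + 1) + (2 + 1/δ)) := by
  have hCB : 0 < 2*(δ/σ + 1) + (2 + 1/δ) := by positivity
  have hQP2 : 1 ≤ Q - P + 2 := by linarith
  rcases lt_or_ge B A with hBA | hAB
  · rw [Finset.Icc_eq_empty (by omega)]
    simp only [Finset.sum_empty, norm_zero]
    nlinarith
  have hsplit : Finset.Icc A B = insert B (Finset.Icc A (B-1)) := by
    ext i; simp only [Finset.mem_Icc, Finset.mem_insert]; omega
  have hBnot : B ∉ Finset.Icc A (B-1) := by simp [Finset.mem_Icc]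
  rw [hsplit, Finset.sum_insert hBnot]
  refine le_trans (norm_add_le _ _) ?_
  rw [EE_norm]
  have main : ‖∑ i ∈ Finset.Icc A (B-1), EE (g i)‖
      ≤ (Q - P + 2) * (2*(δ/σ + 1) + (2 + 1/δ)) := by
    set h : ℤ → ℝ := fun i => g (i+1) - g i with hh_def
    -- chain estimate
    have hchain : ∀ i : ℤ, A ≤ i → ∀ j : ℤ, i ≤ j → j ≤ B - 1 → σ * ((j:ℝ) - i) ≤ h j - h i := by
      intro i hAi
      refine Int.le_induction ?_ ?_
      · intro _; simp
      · intro j hij ih hjB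
        have h1 := ih (by omega)
        have h2 := hstep j (by omega) (by omega)
        simp only [hh_def] at h1 ⊢
        rw [show (j+1+1:ℤ) = j+2 by ring]
        push_cast
        have e : σ * ((j:ℝ) + 1 - (i:ℝ)) = σ * ((j:ℝ) - (i:ℝ)) + σ := by ring
        rw [e]
        linarith
    have hmono : ∀ i j : ℤ, A ≤ i → i ≤ j → j ≤ B - 1 → h i ≤ h j := by
      intro i j hAi hij hjB
      have := hchain i hAi j hij hjB
      have : (0:ℝ) ≤ σ * ((j:ℝ) - i) := by
        apply mul_nonneg hσ.le
        have : (i:ℝ) ≤ (j:ℝ) := by exact_mod_cast hij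
        linarith
      linarith [hchain i hAi j hij hjB]
    -- fibers
    set I : Finset ℤ := Finset.Icc A (B-1) with hI_def
    have hmaps : ∀ i ∈ I, ⌊h i⌋ ∈ Finset.Icc ⌊P⌋ ⌊Q⌋ := by
      intro i hi
      rw [Finset.mem_Icc] at hi ⊢
      obtain ⟨h1, h2⟩ := hrange i hi.1 hi.2
      exact ⟨Int.floor_le_floor h1, Int.floor_le_floor h2⟩
    rw [← Finset.sum_fiberwise_of_maps_to hmaps (fun i => EE (g i))]
    refine le_trans (norm_sum_le _ _) ?_
    -- per fiber bound
    have fiber : ∀ m ∈ Finset.Icc ⌊P⌋ ⌊Q⌋,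
        ‖∑ i ∈ I.filter (fun i => ⌊h i⌋ = m), EE (g i)‖
          ≤ 2*(δ/σ + 1) + (2 + 1/δ) := by
      intro m _
      set F : Finset ℤ := I.filter (fun i => ⌊h i⌋ = m) with hF_def
      have hFmem : ∀ i, i ∈ F ↔ (A ≤ i ∧ i ≤ B - 1 ∧ ⌊h i⌋ = m) := by
        intro i
        simp [hF_def, hI_def, Finset.mem_filter, Finset.mem_Icc, and_assoc]
      -- split into three parts
      have hsplit2 := Finset.sum_filter_add_sum_filter_not F (fun i => h i < m + δ)
        (fun i => EE (g i))
      have hsplit3 := Finset.sum_filter_add_sum_filter_not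
        (F.filter (fun i => ¬ (h i < m + δ))) (fun i => h i ≤ m + 1 - δ)
        (fun i => EE (g i))
      -- bad low
      have hbadlow : ‖∑ i ∈ F.filter (fun i => h i < m + δ), EE (g i)‖ ≤ δ/σ + 1 := by
        refine le_trans (norm_sum_le_card _ _) ?_
        apply card_small _ _ (by positivity)
        intro i hi j hj
        rw [Finset.mem_filter] at hi hj
        obtain ⟨hiF, hilt⟩ := hi
        obtain ⟨hjF, hjlt⟩ := hj
        rw [hFmem] at hiF hjF
        have hifl : (m:ℝ) ≤ h i := by
          have := hiF.2.2 ▸ Int.floor_le (h i)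
          exact_mod_cast this
        have hjfl : (m:ℝ) ≤ h j := by
          have := hjF.2.2 ▸ Int.floor_le (h j)
          exact_mod_cast this
        rcases le_or_gt i j with hij | hij
        · have := hchain i hiF.1 j hij hjF.2.1
          rw [le_div_iff₀ hσ]
          nlinarith
        · have : (j:ℝ) ≤ (i:ℝ) := by exact_mod_cast hij.le
          have : (0:ℝ) ≤ δ/σ := by positivity
          linarith
      -- bad high
      have hbadhigh : ‖∑ i ∈ (F.filter (fun i => ¬ (h i < m + δ))).filter
          (fun i => ¬ (h i ≤ m + 1 - δ)), EE (g i)‖ ≤ δ/σ + 1 := by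
        refine le_trans (norm_sum_le_card _ _) ?_
        apply card_small _ _ (by positivity)
        intro i hi j hj
        rw [Finset.mem_filter] at hi hj
        obtain ⟨hi2, higt⟩ := hi
        obtain ⟨hj2, hjgt⟩ := hj
        rw [Finset.mem_filter] at hi2 hj2
        obtain ⟨hiF, _⟩ := hi2
        obtain ⟨hjF, _⟩ := hj2
        rw [hFmem] at hiF hjF
        have hifl : h i < (m:ℝ) + 1 := by
          have := hiF.2.2 ▸ Int.lt_floor_add_one (h i)
          push_cast at this ⊢
          linarith [this]
        have hjfl : h j < (m:ℝ) + 1 := by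
          have := hjF.2.2 ▸ Int.lt_floor_add_one (h j)
          push_cast at this ⊢
          linarith [this]
        push_neg at higt hjgt
        rcases le_or_gt i j with hij | hij
        · have := hchain i hiF.1 j hij hjF.2.1
          have hd : h j - h i < δ := by linarith
          have : σ * ((j:ℝ) - i) < δ := by linarith
          rw [le_div_iff₀ hσ]
          nlinarith
        · have : (j:ℝ) ≤ (i:ℝ) := by exact_mod_cast hij.le
          have : (0:ℝ) ≤ δ/σ := by positivity
          linarith
      -- good middle
      have hgood : ‖∑ i ∈ (F.filter (fun i => ¬ (h i < m + δ))).filter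
          (fun i => h i ≤ m + 1 - δ), EE (g i)‖ ≤ 2 + 1/δ := by
        set G : Finset ℤ := (F.filter (fun i => ¬ (h i < m + δ))).filter
          (fun i => h i ≤ m + 1 - δ) with hG_def
        have hGmem : ∀ i, i ∈ G ↔ (A ≤ i ∧ i ≤ B - 1 ∧ ⌊h i⌋ = m ∧
            (m:ℝ) + δ ≤ h i ∧ h i ≤ m + 1 - δ) := by
          intro i
          simp only [hG_def, Finset.mem_filter, hFmem, not_lt]
          constructor
          · rintro ⟨⟨⟨h1, h2, h3⟩, h4⟩, h5⟩; exact ⟨h1, h2, h3, h4, h5⟩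
          · rintro ⟨h1, h2, h3, h4, h5⟩; exact ⟨⟨⟨h1, h2, h3⟩, h4⟩, h5⟩
        rcases G.eq_empty_or_nonempty with hGe | hGne
        · rw [hGe]
          simp only [Finset.sum_empty, norm_zero]
          positivity
        · have hGIcc : G = Finset.Icc (G.min' hGne) (G.max' hGne) := by
            apply Finset.Subset.antisymm
            · exact fun i hi => Finset.mem_Icc.mpr ⟨G.min'_le i hi, G.le_max' i hi⟩
            · intro i hi
              rw [Finset.mem_Icc] at hi
              have hmin := (hGmem _).mp (G.min'_mem hGne)
              have hmax := (hGmem _).mp (G.max'_mem hGne)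
              have hiI1 : A ≤ i := le_trans hmin.1 hi.1
              have hiI2 : i ≤ B - 1 := le_trans hi.2 hmax.2.1
              have hlo : (m:ℝ) + δ ≤ h i :=
                le_trans hmin.2.2.2.1 (hmono _ _ hmin.1 hi.1 hiI2)
              have hhi : h i ≤ (m:ℝ) + 1 - δ :=
                le_trans (hmono _ _ hiI1 hi.2 hmax.2.1) hmax.2.2.2.2
              rw [hGmem]
              refine ⟨hiI1, hiI2, ?_, hlo, hhi⟩
              rw [Int.floor_eq_iff]
              constructor
              · push_cast; linarith
              · push_cast; linarith
          rw [hGIcc]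
          apply KL1 g _ _ m δ hδ hδ2
          · intro i hAi hiB
            have hi1 : i ∈ G := by
              rw [hGIcc, Finset.mem_Icc]; omega
            have hthis := (hGmem _).mp hi1
            simp only [hh_def] at hthis
            constructor
            · linarith [hthis.2.2.2.1]
            · linarith [hthis.2.2.2.2]
          · intro i j hAi hij hjB
            have hi1 : i ∈ G := by rw [hGIcc, Finset.mem_Icc]; omega
            have hj1 : j ∈ G := by rw [hGIcc, Finset.mem_Icc]; omega
            have hiG := (hGmem _).mp hi1
            have hjG := (hGmem _).mp hj1
            exact hmono i j hiG.1 hij hjG.2.1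
      calc ‖∑ i ∈ F, EE (g i)‖
          = ‖∑ i ∈ F.filter (fun i => h i < m + δ), EE (g i) +
              (∑ i ∈ (F.filter (fun i => ¬ (h i < m + δ))).filter
                (fun i => h i ≤ m + 1 - δ), EE (g i) +
               ∑ i ∈ (F.filter (fun i => ¬ (h i < m + δ))).filter
                (fun i => ¬ (h i ≤ m + 1 - δ)), EE (g i))‖ := by
            rw [hsplit3, hsplit2]
        _ ≤ (δ/σ + 1) + ((2 + 1/δ) + (δ/σ + 1)) := by
            refine le_trans (norm_add_le _ _) ?_
            have := norm_add_le (∑ i ∈ (F.filter (fun i => ¬ (h i < m + δ))).filter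
                (fun i => h i ≤ m + 1 - δ), EE (g i))
              (∑ i ∈ (F.filter (fun i => ¬ (h i < m + δ))).filter
                (fun i => ¬ (h i ≤ m + 1 - δ)), EE (g i))
            have h1 := hbadlow
            have h2 := hgood
            have h3 := hbadhigh
            linarith
        _ = 2*(δ/σ + 1) + (2 + 1/δ) := by ring
    calc ∑ m ∈ Finset.Icc ⌊P⌋ ⌊Q⌋, ‖∑ i ∈ I.filter (fun i => ⌊h i⌋ = m), EE (g i)‖
        ≤ ∑ m ∈ Finset.Icc ⌊P⌋ ⌊Q⌋, (2*(δ/σ + 1) + (2 + 1/δ)) :=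
          Finset.sum_le_sum fiber
      _ = ((Finset.Icc ⌊P⌋ ⌊Q⌋).card : ℝ) * (2*(δ/σ + 1) + (2 + 1/δ)) := by
          rw [Finset.sum_const, nsmul_eq_mul]
      _ ≤ (Q - P + 2) * (2*(δ/σ + 1) + (2 + 1/δ)) := by
          apply mul_le_mul_of_nonneg_right _ hCB.le
          rw [Int.card_Icc]
          have hfl : ⌊P⌋ ≤ ⌊Q⌋ := Int.floor_le_floor hPQ
          rw [toNat_cast_real (by omega)]
          push_cast
          have h1 := Int.floor_le Q
          have h2 := Int.lt_floor_add_one P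
          linarith
  linarith


lemma incr_low {a b C : ℝ} (ψ : ℝ → ℝ) (hcont : ContinuousOn ψ (Set.Icc a b))
    (hdiff : DifferentiableOn ℝ ψ (Set.Icc a b))
    (hC : ∀ x ∈ Set.Icc a b, C ≤ derivWithin ψ (Set.Icc a b) x) :
    ∀ x ∈ Set.Icc a b, ∀ y ∈ Set.Icc a b, x ≤ y → C * (y - x) ≤ ψ y - ψ x := by
  apply Convex.mul_sub_le_image_sub_of_le_deriv (convex_Icc a b) hcont
    (hdiff.mono interior_subset)
  intro x hx
  rw [interior_Icc] at hx
  rw [← derivWithin_of_mem_nhds (Icc_mem_nhds hx.1 hx.2)]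
  exact hC x (Set.mem_Icc.mpr ⟨hx.1.le, hx.2.le⟩)

lemma incr_up {a b C : ℝ} (ψ : ℝ → ℝ) (hcont : ContinuousOn ψ (Set.Icc a b))
    (hdiff : DifferentiableOn ℝ ψ (Set.Icc a b))
    (hC : ∀ x ∈ Set.Icc a b, derivWithin ψ (Set.Icc a b) x ≤ C) :
    ∀ x ∈ Set.Icc a b, ∀ y ∈ Set.Icc a b, x ≤ y → ψ y - ψ x ≤ C * (y - x) := by
  apply Convex.image_sub_le_mul_sub_of_deriv_le (convex_Icc a b) hcont
    (hdiff.mono interior_subset)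
  intro x hx
  rw [interior_Icc] at hx
  rw [← derivWithin_of_mem_nhds (Icc_mem_nhds hx.1 hx.2)]
  exact hC x (Set.mem_Icc.mpr ⟨hx.1.le, hx.2.le⟩)

lemma main_est (a b ε lam c d : ℝ) (hab : a < b) (hε : 0 < ε) (hε2 : ε ≤ 1/4)
    (hlam : 0 < lam) (hcd : c ≤ d) (φ : ℝ → ℝ)
    (hφc : ContinuousOn φ (Set.Icc a b))
    (hφd : DifferentiableOn ℝ φ (Set.Icc a b))
    (h1 : ∀ x ∈ Set.Icc a b, c ≤ derivWithin φ (Set.Icc a b) x ∧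
      derivWithin φ (Set.Icc a b) x ≤ d)
    (h2 : ∀ x ∈ Set.Icc a b, ∀ y ∈ Set.Icc a b, x ≤ y →
      lam * (y - x) ≤ derivWithin φ (Set.Icc a b) y - derivWithin φ (Set.Icc a b) x) :
    ‖∑ i ∈ Finset.Icc ⌈a/ε⌉ ⌊b/ε⌋, EE (φ (ε * i)/ε)‖
      ≤ 1 + (d - c + 2) * (2*(Real.sqrt ε/(lam*ε) + 1) + (2 + 1/Real.sqrt ε)) := by
  have hδpos : 0 < Real.sqrt ε := Real.sqrt_pos.mpr hε
  have hδhalf : Real.sqrt ε ≤ 1/2 := by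
    have h14 : Real.sqrt (1/4 : ℝ) = 1/2 := by
      rw [show (1/4:ℝ) = (1/2)^2 by norm_num, Real.sqrt_sq (by norm_num)]
    calc Real.sqrt ε ≤ Real.sqrt (1/4) := Real.sqrt_le_sqrt hε2
      _ = 1/2 := h14
  set A : ℤ := ⌈a/ε⌉ with hA_def
  set B : ℤ := ⌊b/ε⌋ with hB_def
  have hAa : a ≤ ε * (A:ℝ) := by
    have := Int.le_ceil (a/ε)
    calc a = ε * (a/ε) := by field_simp
      _ ≤ ε * (A:ℝ) := by apply mul_le_mul_of_nonneg_left this hε.le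
  have hBb : ε * (B:ℝ) ≤ b := by
    have := Int.floor_le (b/ε)
    calc ε * (B:ℝ) ≤ ε * (b/ε) := by apply mul_le_mul_of_nonneg_left this hε.le
      _ = b := by field_simp
  -- increments of φ
  have hinc := incr_low φ hφc hφd (fun x hx => (h1 x hx).1)
  have hdec := incr_up φ hφc hφd (fun x hx => (h1 x hx).2)
  -- range hypothesis
  have hrange : ∀ i : ℤ, A ≤ i → i ≤ B - 1 →
      c ≤ (fun i : ℤ => φ (ε * i)/ε) (i+1) - (fun i : ℤ => φ (ε * i)/ε) i ∧
      (fun i : ℤ => φ (ε * i)/ε) (i+1) - (fun i : ℤ => φ (ε * i)/ε) i ≤ d := by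
    intro i hAi hiB
    have hiA : (A:ℝ) ≤ i := by exact_mod_cast hAi
    have hiB' : ((i:ℝ) + 1) ≤ B := by exact_mod_cast (by omega : i + 1 ≤ B)
    have hx : ε * (i:ℝ) ∈ Set.Icc a b := by
      constructor
      · calc a ≤ ε * (A:ℝ) := hAa
          _ ≤ ε * i := by nlinarith
      · calc ε * (i:ℝ) ≤ ε * ((i:ℝ)+1) := by nlinarith
          _ ≤ ε * (B:ℝ) := by nlinarith
          _ ≤ b := hBb
    have hy : ε * ((i:ℝ)+1) ∈ Set.Icc a b := by
      constructor
      · calc a ≤ ε * (A:ℝ) := hAa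
          _ ≤ ε * ((i:ℝ)+1) := by nlinarith
      · calc ε * ((i:ℝ)+1) ≤ ε * (B:ℝ) := by nlinarith
          _ ≤ b := hBb
    have hxy : ε * (i:ℝ) ≤ ε * ((i:ℝ)+1) := by nlinarith
    have e1 : ε * ((i:ℝ)+1) - ε * (i:ℝ) = ε := by ring
    have l1 := hinc _ hx _ hy hxy
    have l2 := hdec _ hx _ hy hxy
    rw [e1] at l1 l2
    have ecast : ((i+1:ℤ):ℝ) = (i:ℝ) + 1 := by push_cast; ring
    constructor
    · simp only [ecast]
      rw [div_sub_div_same, le_div_iff₀ hε]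
      linarith
    · simp only [ecast]
      rw [div_sub_div_same, div_le_iff₀ hε]
      linarith
  -- step hypothesis
  have hstep : ∀ i : ℤ, A ≤ i → i ≤ B - 2 →
      lam * ε ≤ ((fun i : ℤ => φ (ε * i)/ε) (i+2) - (fun i : ℤ => φ (ε * i)/ε) (i+1)) -
        ((fun i : ℤ => φ (ε * i)/ε) (i+1) - (fun i : ℤ => φ (ε * i)/ε) i) := by
    intro i hAi hiB
    have hiA : (A:ℝ) ≤ i := by exact_mod_cast hAi
    have hiB' : ((i:ℝ) + 2) ≤ B := by exact_mod_cast (by omega : i + 2 ≤ B)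
    set x : ℝ := ε * (i:ℝ) with hx_def
    have hxa : a ≤ x := by
      calc a ≤ ε * (A:ℝ) := hAa
        _ ≤ x := by rw [hx_def]; nlinarith
    have hx2b : x + 2*ε ≤ b := by
      have : ε * ((i:ℝ)+2) ≤ ε * (B:ℝ) := by nlinarith
      calc x + 2*ε = ε * ((i:ℝ)+2) := by rw [hx_def]; ring
        _ ≤ ε * (B:ℝ) := this
        _ ≤ b := hBb
    -- work on D = Icc a (b - ε) with ψ u = φ (u+ε) - φ u
    have hDne : a ≤ b - ε := by linarith
    set ψ : ℝ → ℝ := fun u => φ (u + ε) - φ u with hψ_def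
    have hmaps : ∀ u ∈ Set.Icc a (b - ε), u + ε ∈ Set.Icc a b := by
      intro u hu
      rw [Set.mem_Icc] at hu ⊢
      constructor <;> linarith [hu.1, hu.2]
    have hsub : Set.Icc a (b-ε) ⊆ Set.Icc a b := by
      apply Set.Icc_subset_Icc le_rfl; linarith
    have hψc : ContinuousOn ψ (Set.Icc a (b-ε)) := by
      apply ContinuousOn.sub
      · exact hφc.comp (Continuous.continuousOn (by continuity)) hmaps
      · exact hφc.mono hsub
    have hdiffat : ∀ u ∈ Set.Ioo a b, DifferentiableAt ℝ φ u := by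
      intro u hu
      exact (hφd u (Set.mem_Icc.mpr ⟨hu.1.le, hu.2.le⟩)).differentiableAt
        (Icc_mem_nhds hu.1 hu.2)
    have hψd : DifferentiableOn ℝ ψ (interior (Set.Icc a (b-ε))) := by
      rw [interior_Icc]
      intro u hu
      have h1' : DifferentiableAt ℝ (fun w => φ (w + ε)) u := by
        have := (hdiffat (u+ε) (by constructor <;> [linarith [hu.1]; linarith [hu.2]])).comp u
          ((differentiableAt_id).add_const ε)
        exact this
      have h2' : DifferentiableAt ℝ φ u := hdiffat u (by
        constructor
        · exact hu.1
        · linarith [hu.2])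
      exact ((h1'.sub h2').differentiableWithinAt)
    have hψderiv : ∀ u ∈ interior (Set.Icc a (b-ε)), lam * ε ≤ deriv ψ u := by
      intro u hu
      rw [interior_Icc] at hu
      have hu1 : u ∈ Set.Ioo a b := ⟨hu.1, by linarith [hu.2]⟩
      have hu2 : u + ε ∈ Set.Ioo a b := ⟨by linarith [hu.1], by linarith [hu.2]⟩
      have h1' : DifferentiableAt ℝ (fun w => φ (w + ε)) u := by
        have := (hdiffat _ hu2).comp u ((differentiableAt_id).add_const ε)
        exact this
      have h2' : DifferentiableAt ℝ φ u := hdiffat u hu1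
      have hde : deriv ψ u = deriv (fun w => φ (w + ε)) u - deriv φ u := by
        simp only [hψ_def]
        exact deriv_sub h1' h2'
      rw [hde, deriv_comp_add_const]
      have e1 : deriv φ (u + ε) = derivWithin φ (Set.Icc a b) (u + ε) :=
        (derivWithin_of_mem_nhds (Icc_mem_nhds hu2.1 hu2.2)).symm
      have e2 : deriv φ u = derivWithin φ (Set.Icc a b) u :=
        (derivWithin_of_mem_nhds (Icc_mem_nhds hu1.1 hu1.2)).symm
      rw [e1, e2]
      have := h2 u (Set.mem_Icc.mpr ⟨hu1.1.le, hu1.2.le⟩) (u+ε)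
        (Set.mem_Icc.mpr ⟨hu2.1.le, hu2.2.le⟩) (by linarith)
      have e3 : u + ε - u = ε := by ring
      rw [e3] at this
      linarith
    have key := Convex.mul_sub_le_image_sub_of_le_deriv (convex_Icc a (b-ε)) hψc hψd hψderiv
      x (Set.mem_Icc.mpr ⟨hxa, by linarith⟩) (x+ε)
      (Set.mem_Icc.mpr ⟨by linarith, by linarith⟩) (by linarith)
    -- key : lam*ε*((x+ε)-x) ≤ ψ (x+ε) - ψ x
    have e4 : x + ε - x = ε := by ring
    rw [e4] at key
    simp only [hψ_def] at key
    -- translate to g differences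
    have ec1 : ((i+1:ℤ):ℝ) = (i:ℝ) + 1 := by push_cast; ring
    have ec2 : ((i+2:ℤ):ℝ) = (i:ℝ) + 2 := by push_cast; ring
    simp only [ec1, ec2]
    have ex1 : ε * ((i:ℝ)+1) = x + ε := by rw [hx_def]; ring
    have ex2 : ε * ((i:ℝ)+2) = x + ε + ε := by rw [hx_def]; ring
    rw [ex1, ex2]
    rw [div_sub_div_same, div_sub_div_same, ← sub_div, le_div_iff₀ hε]
    nlinarith [key]
  have := KLmulti (fun i : ℤ => φ (ε * i)/ε) A B (lam*ε) (Real.sqrt ε) c d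
    (by positivity) hδpos hδhalf hcd hstep hrange
  exact this


open MeasureTheory Filter

theorem stmt11 (a b : ℝ) (hab : a < b) (f : ℝ → ℝ)
    (hf : ContDiffOn ℝ 2 f (Set.Icc a b))
    (hf'' : ∀ t ∈ Set.Icc a b,
      derivWithin (derivWithin f (Set.Icc a b)) (Set.Icc a b) t ≠ 0)
    (hn : ∃ n : ℤ, (n : ℝ) < derivWithin f (Set.Icc a b) a ∧
      derivWithin f (Set.Icc a b) a < (n : ℝ) + 1 ∧
      (n : ℝ) < derivWithin f (Set.Icc a b) b ∧
      derivWithin f (Set.Icc a b) b < (n : ℝ) + 1)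
    (M : ℤ) (hM : M ≠ 0) :
    Tendsto
      (fun ε : ℝ => (ε : ℂ) *
        ∑ i ∈ Finset.Icc ⌈a / ε⌉ ⌊b / ε⌋,
          Complex.exp (2 * Real.pi * Complex.I * (M : ℂ) * (f (ε * i) / ε)))
      (nhdsWithin 0 (Set.Ioi 0)) (nhds 0) := by
  classical
  have hu : UniqueDiffOn ℝ (Set.Icc a b) := uniqueDiffOn_Icc hab
  set f' : ℝ → ℝ := derivWithin f (Set.Icc a b) with hf'_def
  set f'' : ℝ → ℝ := derivWithin f' (Set.Icc a b) with hf''_def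
  have hKne : (Set.Icc a b).Nonempty := Set.nonempty_Icc.mpr hab.le
  have hf1 : ContDiffOn ℝ 1 f' (Set.Icc a b) := hf.derivWithin hu (by norm_num)
  have hdf : DifferentiableOn ℝ f (Set.Icc a b) := hf.differentiableOn (by norm_num)
  have hdf' : DifferentiableOn ℝ f' (Set.Icc a b) := hf1.differentiableOn (by norm_num)
  have hcf' : ContinuousOn f' (Set.Icc a b) := hdf'.continuousOn
  have hcf'' : ContinuousOn f'' (Set.Icc a b) := hf1.continuousOn_derivWithin hu (le_refl 1)
  -- minimum of |f''|
  obtain ⟨xm, hxm, hxmin⟩ := isCompact_Icc.exists_isMinOn hKne hcf''.abs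
  set lam : ℝ := |f'' xm| with hlam_def
  have hlam : 0 < lam := abs_pos.mpr (hf'' xm hxm)
  have hlow : ∀ x ∈ Set.Icc a b, lam ≤ |f'' x| := fun x hx => isMinOn_iff.mp hxmin x hx
  -- sign dichotomy
  have hpos : (∀ x ∈ Set.Icc a b, 0 < f'' x) ∨ (∀ x ∈ Set.Icc a b, f'' x < 0) := by
    by_contra hcon
    push_neg at hcon
    obtain ⟨⟨x, hx, hx0⟩, ⟨y, hy, hy0⟩⟩ := hcon
    have hx0' : f'' x < 0 := lt_of_le_of_ne hx0 (hf'' x hx)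
    have hy0' : 0 < f'' y := lt_of_le_of_ne hy0 (Ne.symm (hf'' y hy))
    have hsub : Set.uIcc x y ⊆ Set.Icc a b := Set.uIcc_subset_Icc hx hy
    have := intermediate_value_uIcc (hcf''.mono hsub)
    have h0 : (0:ℝ) ∈ Set.uIcc (f'' x) (f'' y) :=
      Set.mem_uIcc.mpr (Or.inl ⟨hx0'.le, hy0'.le⟩)
    obtain ⟨z, hz, hz0⟩ := this h0
    exact hf'' z (hsub hz) hz0
  -- choose μ = ±M with lam ≤ μ * f''
  have hM1 : (1:ℝ) ≤ |(M:ℝ)| := by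
    rw [← Int.cast_abs]
    exact_mod_cast Int.one_le_abs hM
  obtain ⟨μ, hμM, hμf⟩ : ∃ μ : ℝ, (μ = (M:ℝ) ∨ μ = -(M:ℝ)) ∧
      ∀ x ∈ Set.Icc a b, lam ≤ μ * f'' x := by
    rcases hpos with hp | hn'
    · rcases (by omega : 0 < M ∨ M < 0) with hM' | hM'
      · refine ⟨(M:ℝ), Or.inl rfl, fun x hx => ?_⟩
        have h1 := hp x hx
        have h2 := hlow x hx
        rw [abs_of_pos h1] at h2
        have : (1:ℝ) ≤ (M:ℝ) := by exact_mod_cast hM'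
        nlinarith
      · refine ⟨-(M:ℝ), Or.inr rfl, fun x hx => ?_⟩
        have h1 := hp x hx
        have h2 := hlow x hx
        rw [abs_of_pos h1] at h2
        have : (1:ℝ) ≤ -(M:ℝ) := by
          have : (M:ℝ) ≤ -1 := by exact_mod_cast (by omega : M ≤ -1)
          linarith
        nlinarith
    · rcases (by omega : 0 < M ∨ M < 0) with hM' | hM'
      · refine ⟨-(M:ℝ), Or.inr rfl, fun x hx => ?_⟩
        have h1 := hn' x hx
        have h2 := hlow x hx
        rw [abs_of_neg h1] at h2
        have : (1:ℝ) ≤ (M:ℝ) := by exact_mod_cast hM'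
        nlinarith
      · refine ⟨(M:ℝ), Or.inl rfl, fun x hx => ?_⟩
        have h1 := hn' x hx
        have h2 := hlow x hx
        rw [abs_of_neg h1] at h2
        have : (M:ℝ) ≤ -1 := by exact_mod_cast (by omega : M ≤ -1)
        nlinarith
  -- the phase function
  set φ : ℝ → ℝ := fun x => μ * f x with hφ_def
  have hφc : ContinuousOn φ (Set.Icc a b) :=
    ContinuousOn.mul continuousOn_const hf.continuousOn
  have hφd : DifferentiableOn ℝ φ (Set.Icc a b) :=
    fun x hx => ((hdf x hx).const_mul μ)
  have hφ'eq : ∀ x ∈ Set.Icc a b, derivWithin φ (Set.Icc a b) x = μ * f' x := by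
    intro x hx
    exact derivWithin_const_mul μ (hdf x hx)
  -- extrema of f'
  obtain ⟨x1, hx1, hmin1⟩ := isCompact_Icc.exists_isMinOn hKne hcf'
  obtain ⟨x2, hx2, hmax2⟩ := isCompact_Icc.exists_isMaxOn hKne hcf'
  set c0 : ℝ := f' x1 with hc0_def
  set d0 : ℝ := f' x2 with hd0_def
  have hbnd : ∀ x ∈ Set.Icc a b, c0 ≤ f' x ∧ f' x ≤ d0 :=
    fun x hx => ⟨isMinOn_iff.mp hmin1 x hx, isMaxOn_iff.mp hmax2 x hx⟩
  set cφ : ℝ := min (μ*c0) (μ*d0) with hcφ_def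
  set dφ : ℝ := max (μ*c0) (μ*d0) with hdφ_def
  have hcdφ : cφ ≤ dφ := le_trans (min_le_left _ _) (le_max_left _ _)
  have h1 : ∀ x ∈ Set.Icc a b, cφ ≤ derivWithin φ (Set.Icc a b) x ∧
      derivWithin φ (Set.Icc a b) x ≤ dφ := by
    intro x hx
    rw [hφ'eq x hx]
    obtain ⟨hl, hr⟩ := hbnd x hx
    rcases le_total 0 μ with hμ | hμ
    · constructor
      · exact le_trans (min_le_left _ _) (by nlinarith)
      · exact le_trans (by nlinarith) (le_max_right _ _)
    · constructor
      · exact le_trans (min_le_right _ _) (by nlinarith)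
      · exact le_trans (by nlinarith) (le_max_left _ _)
  have h2 : ∀ x ∈ Set.Icc a b, ∀ y ∈ Set.Icc a b, x ≤ y →
      lam * (y - x) ≤ derivWithin φ (Set.Icc a b) y - derivWithin φ (Set.Icc a b) x := by
    have key := incr_low (fun x => μ * f' x)
      (ContinuousOn.mul continuousOn_const hcf')
      (fun x hx => ((hdf' x hx).const_mul μ))
      (fun x hx => by
        rw [derivWithin_const_mul μ (hdf' x hx)]
        exact hμf x hx)
    intro x hx y hy hxy
    rw [hφ'eq x hx, hφ'eq y hy]
    exact key x hx y hy hxy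
  -- constant
  set R : ℝ := dφ - cφ with hR_def
  have hR0 : 0 ≤ R := by simp [hR_def]; linarith
  set C : ℝ := 1 + (R+2)*(2*(1/lam) + 5) with hC_def
  have hC0 : 0 < C := by positivity
  -- the norm identity
  have hnorm_eq : ∀ ε : ℝ, 0 < ε →
      ‖∑ i ∈ Finset.Icc ⌈a/ε⌉ ⌊b/ε⌋,
        Complex.exp (2 * Real.pi * Complex.I * (M : ℂ) * (f (ε * i) / ε))‖
      = ‖∑ i ∈ Finset.Icc ⌈a/ε⌉ ⌊b/ε⌋, EE (φ (ε * i)/ε)‖ := by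
    intro ε hε
    have hterm : ∀ i : ℤ,
        Complex.exp (2 * Real.pi * Complex.I * (M : ℂ) * (f (ε * i) / ε))
          = EE ((M:ℝ) * f (ε * i)/ε) := by
      intro i
      rw [EE_def]
      congr 1
      push_cast
      ring
    rcases hμM with hμM | hμM
    · congr 1
      apply Finset.sum_congr rfl
      intro i _
      rw [hterm i, hφ_def, hμM]
    · have : ∀ i : ℤ, EE (φ (ε * i)/ε) = starRingEnd ℂ
          (Complex.exp (2 * Real.pi * Complex.I * (M : ℂ) * (f (ε * i) / ε))) := by
        intro i
        rw [hterm i]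
        rw [show φ (ε * i)/ε = -((M:ℝ) * f (ε * i)/ε) by rw [hφ_def, hμM]; ring]
        exact EE_neg _
      rw [Finset.sum_congr rfl (fun i _ => this i), ← map_sum]
      rw [Complex.norm_conj]
  -- eventual bound
  have hbound : ∀ ε : ℝ, ε ∈ Set.Ioo (0:ℝ) (1/4) →
      ‖(ε : ℂ) * ∑ i ∈ Finset.Icc ⌈a/ε⌉ ⌊b/ε⌋,
        Complex.exp (2 * Real.pi * Complex.I * (M : ℂ) * (f (ε * i) / ε))‖
      ≤ C * Real.sqrt ε := by
    intro ε hεm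
    obtain ⟨hε, hε4⟩ := hεm
    set s : ℝ := Real.sqrt ε with hs_def
    have hs0 : 0 < s := Real.sqrt_pos.mpr hε
    have hs2 : s^2 = ε := Real.sq_sqrt hε.le
    have hs1 : s ≤ 1 := by
      nlinarith [hs2, hs0]
    have best := main_est a b ε lam cφ dφ hab hε (by linarith) hlam hcdφ φ hφc hφd h1 h2
    rw [norm_mul, Complex.norm_real, Real.norm_eq_abs, abs_of_pos hε, hnorm_eq ε hε]
    have hRHS : s * (1 + (R+2)*(2*(s/(lam*ε) + 1) + (2 + 1/s))) ≤ C := by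
      have e1 : s * (s/(lam*ε)) = 1/lam := by
        rw [← hs2]
        field_simp
      have e2 : s * (1/s) = 1 := by field_simp
      have expand : s * (1 + (R+2)*(2*(s/(lam*ε) + 1) + (2 + 1/s)))
          = s + (R+2)*(2*(s * (s/(lam*ε))) + 2*s + 2*s + s * (1/s)) := by ring
      rw [expand, e1, e2]
      nlinarith [hR0, hs1, hs0]
    have hfinal : ε * (1 + (dφ - cφ + 2)*(2*(s/(lam*ε) + 1) + (2 + 1/s))) ≤ C * s := by
      have : ε * (1 + (dφ - cφ + 2)*(2*(s/(lam*ε) + 1) + (2 + 1/s)))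
          = s * (s * (1 + (R+2)*(2*(s/(lam*ε) + 1) + (2 + 1/s)))) := by
        rw [← hs2, hR_def]; ring
      rw [this]
      calc s * (s * (1 + (R+2)*(2*(s/(lam*ε) + 1) + (2 + 1/s))))
          ≤ s * C := by
            apply mul_le_mul_of_nonneg_left hRHS hs0.le
        _ = C * s := by ring
    calc ε * ‖∑ i ∈ Finset.Icc ⌈a/ε⌉ ⌊b/ε⌋, EE (φ (ε * i)/ε)‖
        ≤ ε * (1 + (dφ - cφ + 2)*(2*(s/(lam*ε) + 1) + (2 + 1/s))) := by
          apply mul_le_mul_of_nonneg_left best hε.le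
      _ ≤ C * s := hfinal
  -- squeeze
  apply squeeze_zero_norm'
  · filter_upwards [Ioo_mem_nhdsGT_of_mem (by norm_num : (0:ℝ) ∈ Set.Ico (0:ℝ) (1/4))]
    intro ε hε
    exact hbound ε hε
  · have h1' : Tendsto Real.sqrt (nhds 0) (nhds 0) := by
      have := Real.continuous_sqrt.tendsto 0
      simpa using this
    have h2' : Tendsto (fun ε : ℝ => C * Real.sqrt ε) (nhds 0) (nhds 0) := by
      have := h1'.const_mul C
      simpa using this
    exact h2'.mono_left nhdsWithin_le_nhds
end

section
/- Let φ: ℝ → ℝ be compactly supported, twice continuously differentiable, and satisfy Σ_{j∈ℤ} j^m φ(t − j) = t^m for all t ∈ ℝ and m = 0, 1, 2. Define ψ(q, s) := Σ_{j∈ℤ} max(j − q + s, 0) · φ''(q − j). Let Q be a real symmetric positive definite 2×2 matrix. Then for every h ∈ ℝ, (1 / (2π √(det Q))) ∫_{ℝ²} ∫_0^1 ψ( t, h + (1/2) ⟨Q⁻¹ α, α⟩ ) dt dα = ∫_h^∞ φ(s) ds. -/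
open MeasureTheory Matrix

lemma sum_shift (f : ℝ → ℝ) (hf : Continuous f) (m : ℤ) (n : ℕ) :
    ∑ j ∈ Finset.Icc m (m + n), ∫ u in (0 - (j:ℝ))..(1 - j), f u
      = ∫ u in (0 - ((m:ℝ) + n))..(1 - m), f u := by
  induction n with
  | zero => simp
  | succ n ih =>
    have hins : Finset.Icc m (m + (n+1 : ℕ)) = insert (m + (n:ℕ) + 1) (Finset.Icc m (m + n)) := by
      ext x
      simp only [Finset.mem_Icc, Finset.mem_insert]
      push_cast
      omega
    rw [hins, Finset.sum_insert (by simp), ih]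
    have h1 : IntervalIntegrable f volume (0 - ((m:ℝ) + (n+1:ℕ))) (0 - ((m:ℝ) + n)) :=
      hf.intervalIntegrable _ _
    have h2 : IntervalIntegrable f volume (0 - ((m:ℝ) + n)) (1 - m) :=
      hf.intervalIntegrable _ _
    have key := intervalIntegral.integral_add_adjacent_intervals h1 h2
    have e1 : (1 : ℝ) - ((m:ℤ) + (n:ℕ) + 1 : ℤ) = 0 - ((m:ℝ) + n) := by push_cast; ring
    have e2 : (0 : ℝ) - ((m:ℤ) + (n:ℕ) + 1 : ℤ) = 0 - ((m:ℝ) + (n+1:ℕ)) := by push_cast; ring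
    rw [e1, e2, key]

lemma lemA (φ : ℝ → ℝ) (hsupp : HasCompactSupport φ) (hsmooth : ContDiff ℝ 2 φ) (s : ℝ) :
    ∫ t in (0:ℝ)..1, psi φ t s = φ s := by
  have h2 : ContDiff ℝ (1 + 1 : ℕ) φ := by exact_mod_cast hsmooth
  have h1 : ContDiff ℝ 1 (deriv φ) := (contDiff_succ_iff_deriv.mp h2).2.2
  have hc2 : Continuous (deriv (deriv φ)) := h1.continuous_deriv le_rfl
  have hd2 : ∀ x : ℝ, HasDerivAt (deriv φ) (deriv (deriv φ) x) x := fun x =>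
    ((h1.differentiable one_ne_zero).differentiableAt).hasDerivAt
  obtain ⟨R0, hR0pos, hR0⟩ := hsupp.exists_pos_le_norm
  obtain ⟨R1, hR1pos, hR1⟩ := hsupp.deriv.exists_pos_le_norm (f := deriv φ)
  obtain ⟨R2, hR2pos, hR2⟩ := hsupp.deriv.deriv.exists_pos_le_norm (f := deriv (deriv φ))
  set R : ℝ := max R0 (max R1 R2) with hRdef
  obtain ⟨N, hN⟩ := exists_nat_ge (R + |s| + 2)
  have hRN : R + |s| + 2 ≤ N := hN
  have hR0N : R0 ≤ R := le_max_left _ _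
  have hR1N : R1 ≤ R := le_trans (le_max_left _ _) (le_max_right _ _)
  have hR2N : R2 ≤ R := le_trans (le_max_right _ _) (le_max_right _ _)
  have hRpos : 0 < R := lt_of_lt_of_le hR0pos hR0N
  set f : ℝ → ℝ := fun u => max (s - u) 0 * deriv (deriv φ) u with hfdef
  have hfc : Continuous f :=
    ((continuous_const.sub continuous_id).max continuous_const).mul hc2
  -- Step 1: pointwise, psi is a finite sum
  have hpsi : Set.EqOn (fun t => psi φ t s)
      (fun t => ∑ j ∈ Finset.Icc (-(N:ℤ)) (-(N:ℤ) + (2*N : ℕ)), f (t - (j:ℝ)))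
      (Set.uIcc (0:ℝ) 1) := by
    intro t ht
    rw [Set.uIcc_of_le (by norm_num : (0:ℝ) ≤ 1)] at ht
    have ht0 : 0 ≤ t := ht.1
    have ht1 : t ≤ 1 := ht.2
    show psi φ t s = _
    unfold psi
    have hre : ∀ j : ℤ, max ((j:ℝ) - t + s) 0 * deriv (deriv φ) (t - j) = f (t - (j:ℝ)) := by
      intro j
      show _ = max (s - (t - j)) 0 * _
      rw [show (j:ℝ) - t + s = s - (t - j) by ring]
    simp only [hre]
    apply tsum_eq_sum
    intro j hj
    rw [Finset.mem_Icc] at hj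
    have hj2 : j ≤ -(N:ℤ) - 1 ∨ (N:ℤ) + 1 ≤ j := by omega
    have hz : deriv (deriv φ) (t - j) = 0 := by
      apply hR2
      rw [Real.norm_eq_abs]
      rcases hj2 with hj2 | hj2
      · have hj' : (j:ℝ) ≤ -(N:ℝ) - 1 := by exact_mod_cast hj2
        rw [abs_of_pos (by nlinarith [abs_nonneg s])]
        nlinarith [abs_nonneg s]
      · have hj' : (N:ℝ) + 1 ≤ (j:ℝ) := by exact_mod_cast hj2
        rw [abs_of_neg (by nlinarith [abs_nonneg s]), neg_sub]
        nlinarith [abs_nonneg s]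
    simp [f, hz]
  rw [intervalIntegral.integral_congr hpsi]
  rw [intervalIntegral.integral_finset_sum (μ := volume)
    (f := fun (j : ℤ) (t : ℝ) => f (t - (j:ℝ)))
    (fun j _ => ((hfc.comp (continuous_sub_right ((j:ℝ)))).intervalIntegrable _ _))]
  have hcomp : ∀ j : ℤ, (∫ t in (0:ℝ)..1, f (t - (j:ℝ))) = ∫ u in (0 - (j:ℝ))..(1 - (j:ℝ)), f u :=
    fun j => intervalIntegral.integral_comp_sub_right f (j:ℝ)
  simp only [hcomp]
  rw [sum_shift f hfc]
  -- now goal: ∫ u in (0 - ((-N:ℤ):ℝ) + (2N))..(1 - (-N)), f u = φ s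
  push_cast
  rw [show (0:ℝ) - (-(N:ℝ) + 2*N) = -(N:ℝ) by ring, show (1:ℝ) - -(N:ℝ) = 1 + N by ring]
  -- split at s
  have hsle : -(N:ℝ) ≤ s := by
    have := abs_le.mp (le_refl |s|) |>.1
    nlinarith [neg_abs_le s, hRpos]
  have hsle2 : s ≤ 1 + N := by nlinarith [le_abs_self s, hRpos]
  rw [← intervalIntegral.integral_add_adjacent_intervals
    (hfc.intervalIntegrable (-(N:ℝ)) s) (hfc.intervalIntegrable s (1 + N))]
  have hzero : (∫ u in s..(1 + (N:ℝ)), f u) = 0 := by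
    have : Set.EqOn f (fun _ => (0:ℝ)) (Set.uIcc s (1 + N)) := by
      intro u hu
      rw [Set.uIcc_of_le hsle2] at hu
      have : max (s - u) 0 = 0 := max_eq_right (by linarith [hu.1])
      simp [f, this]
    rw [intervalIntegral.integral_congr this]
    simp
  rw [hzero, add_zero]
  -- first piece: max = s - u there
  have hcg : Set.EqOn f (fun u => (s - u) * deriv (deriv φ) u) (Set.uIcc (-(N:ℝ)) s) := by
    intro u hu
    rw [Set.uIcc_of_le hsle] at hu
    have : max (s - u) 0 = s - u := max_eq_left (by linarith [hu.2])
    simp [f, this]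
  rw [intervalIntegral.integral_congr hcg]
  have hibp := intervalIntegral.integral_mul_deriv_eq_deriv_mul
    (u := fun x => s - x) (u' := fun _ => (-1:ℝ)) (v := deriv φ) (v' := deriv (deriv φ))
    (a := -(N:ℝ)) (b := s)
    (fun x _ => by simpa using ((hasDerivAt_id x).const_sub s))
    (fun x _ => hd2 x)
    ((continuous_const).intervalIntegrable _ _)
    (hc2.intervalIntegrable _ _)
  rw [hibp]
  have hNR : R ≤ ‖-(N:ℝ)‖ := by
    rw [Real.norm_eq_abs, abs_neg, abs_of_nonneg (by positivity)]
    nlinarith [abs_nonneg s]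
  have hphiN : φ (-(N:ℝ)) = 0 := hR0 _ (le_trans hR0N hNR)
  have hphi'N : deriv φ (-(N:ℝ)) = 0 := hR1 _ (le_trans hR1N hNR)
  have hftc : (∫ x in (-(N:ℝ))..s, deriv φ x) = φ s - φ (-(N:ℝ)) :=
    intervalIntegral.integral_deriv_eq_sub
      (fun x _ => (hsmooth.differentiable (by norm_num)).differentiableAt)
      ((h1.continuous).intervalIntegrable _ _)
  have : (∫ x in (-(N:ℝ))..s, (-1 : ℝ) * deriv φ x) = -(φ s - φ (-(N:ℝ))) := by
    rw [← hftc, ← intervalIntegral.integral_neg]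
    congr 1; funext x; ring
  rw [this, hphiN, hphi'N]
  ring

lemma cov (B : Matrix (Fin 2) (Fin 2) ℝ) (hdet : B.det ≠ 0) (g : (Fin 2 → ℝ) → ℝ)
    (hg : Continuous g) :
    ∫ α : Fin 2 → ℝ, g α = |B.det| * ∫ β : Fin 2 → ℝ, g (B.mulVec β) := by
  set L : (Fin 2 → ℝ) →ₗ[ℝ] (Fin 2 → ℝ) := Matrix.toLin' B with hL
  have hdetL : LinearMap.det L = B.det := by exact LinearMap.det_toLin' B
  have hmap : Measure.map L volume = ENNReal.ofReal |(B.det)⁻¹| • volume := by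
    rw [← hdetL] at hdet ⊢
    exact Measure.map_linearMap_addHaar_eq_smul_addHaar volume hdet
  have hLc : Continuous L := L.continuous_of_finiteDimensional
  have h1 : ∫ β : Fin 2 → ℝ, g (B.mulVec β) = ∫ y, g y ∂(Measure.map L volume) := by
    rw [integral_map hLc.aemeasurable hg.aestronglyMeasurable]
    simp [hL, Matrix.toLin'_apply]
  rw [h1, hmap, integral_smul_measure, ENNReal.toReal_ofReal (abs_nonneg _), smul_eq_mul,
    ← mul_assoc, abs_inv, mul_inv_cancel₀ (abs_ne_zero.mpr hdet), one_mul]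

lemma ball_vol : (volume (Metric.ball (0 : EuclideanSpace ℝ (Fin 2)) 1)).toReal = Real.pi := by
  rw [EuclideanSpace.volume_ball]
  simp only [Fintype.card_fin]
  rw [show ((2:ℕ):ℝ)/2 + 1 = 2 by norm_num, Real.Gamma_two, div_one,
    Real.sq_sqrt Real.pi_nonneg, ENNReal.ofReal_one, one_pow, one_mul,
    ENNReal.toReal_ofReal Real.pi_nonneg]

lemma euc (φ : ℝ → ℝ) (hsupp : HasCompactSupport φ) (hcont : Continuous φ) (h : ℝ) :
    ∫ β : Fin 2 → ℝ, φ (h + 1/2 * (β ⬝ᵥ β)) = 2 * Real.pi * ∫ u in Set.Ioi h, φ u := by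
  obtain ⟨R, hRpos, hR⟩ := hsupp.exists_pos_le_norm
  set f₀ : ℝ → ℝ := fun y => φ (h + 1/2 * y^2) with hf₀
  have step1 : ∫ β : Fin 2 → ℝ, φ (h + 1/2 * (β ⬝ᵥ β))
      = ∫ x : EuclideanSpace ℝ (Fin 2), f₀ ‖x‖ := by
    have mp := EuclideanSpace.volume_preserving_symm_measurableEquiv_toLp (Fin 2)
    rw [← mp.integral_comp' (fun β => φ (h + 1/2 * (β ⬝ᵥ β)))]
    congr 1
    funext x
    have hx : (MeasurableEquiv.toLp 2 (Fin 2 → ℝ)).symm x ⬝ᵥ (MeasurableEquiv.toLp 2 (Fin 2 → ℝ)).symm x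
        = ‖x‖ ^ 2 := by
      rw [EuclideanSpace.norm_eq, Real.sq_sqrt (Finset.sum_nonneg fun i _ => sq_nonneg _)]
      simp [dotProduct, sq]
    simp only [hx, hf₀]
  rw [step1, integral_fun_norm_addHaar volume f₀, finrank_euclideanSpace_fin, measureReal_def, ball_vol]
  have hfc : Continuous fun x : ℝ => h + 1/2 * x ^ 2 := by continuity
  have key : (∫ y in Set.Ioi (0:ℝ), y ^ (2 - 1) • f₀ y) = ∫ u in Set.Ioi h, φ u := by
    have h0 : (fun y : ℝ => h + 1/2 * y^2) 0 = h := by norm_num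
    rw [← h0]
    have hff' : ∀ x ∈ Set.Ioi (0:ℝ), HasDerivWithinAt (fun y : ℝ => h + 1/2 * y^2) x (Set.Ioi x) x := by
      intro x _
      have hd : HasDerivAt (fun y : ℝ => h + 1/2 * y^2) x x := by
        have := ((hasDerivAt_pow 2 x).const_mul (1/2:ℝ)).const_add h
        exact this.congr_deriv (by simp)
      exact hd.hasDerivWithinAt
    have hft : Filter.Tendsto (fun y : ℝ => h + 1/2 * y^2) Filter.atTop Filter.atTop := by
      apply Filter.tendsto_atTop_add_const_left
      have h2 : Filter.Tendsto (fun y : ℝ => y^2) Filter.atTop Filter.atTop :=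
        Filter.tendsto_pow_atTop (by norm_num)
      exact h2.const_mul_atTop (by norm_num)
    have hcs : HasCompactSupport (fun x : ℝ => x • φ (h + 1/2 * x^2)) := by
      set c : ℝ := Real.sqrt (2*(R + |h|)) + 1 with hc
      apply HasCompactSupport.intro (isCompact_Icc (a := -c) (b := c))
      intro x hx
      simp only [Set.mem_Icc, not_and_or, not_le] at hx
      have hx2 : c ^ 2 < x ^ 2 := by
        have hcpos : 0 < c := by positivity
        rcases hx with hx | hx <;> nlinarith
      have hcsq : 2*(R + |h|) ≤ c ^ 2 := by
        have h1 : 0 ≤ 2*(R + |h|) := by positivity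
        have := Real.sq_sqrt h1
        nlinarith [Real.sqrt_nonneg (2*(R + |h|))]
      have : φ (h + 1/2 * x^2) = 0 := by
        apply hR
        rw [Real.norm_eq_abs, abs_of_pos (by nlinarith [abs_nonneg h, neg_abs_le h])]
        nlinarith [neg_abs_le h]
      show x • φ (h + 1/2 * x^2) = 0
      rw [this, smul_zero]
    have := MeasureTheory.integral_comp_smul_deriv_Ioi
      (f := fun y : ℝ => h + 1/2 * y^2) (f' := fun y : ℝ => y) (g := φ) (a := (0:ℝ))
      hfc.continuousOn hft hff' hcont.continuousOn
      ((hcont.integrable_of_hasCompactSupport hsupp).integrableOn)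
      (((continuous_id.smul (hcont.comp hfc)).integrable_of_hasCompactSupport hcs).integrableOn)
    rw [← this]
    norm_num [hf₀]
  rw [key]
  rw [nsmul_eq_mul, smul_eq_mul]
  push_cast
  ring

open scoped MatrixOrder in
lemma sqrt_facts (Q : Matrix (Fin 2) (Fin 2) ℝ) (hQ : Q.PosSemidef) :
    ∃ B : Matrix (Fin 2) (Fin 2) ℝ, B * B = Q ∧ B.PosSemidef :=
  ⟨CFC.sqrt Q, CFC.sqrt_mul_sqrt_self Q hQ.nonneg, (CFC.sqrt_nonneg Q).posSemidef⟩

theorem stmt14 (φ : ℝ → ℝ)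
    (hsupp : HasCompactSupport φ)
    (hsmooth : ContDiff ℝ 2 φ)
    (hA1 : ∀ m : ℕ, m ≤ 2 → ∀ t : ℝ,
      ∑' j : ℤ, (j : ℝ) ^ m * φ (t - (j : ℝ)) = t ^ m)
    (Q : Matrix (Fin 2) (Fin 2) ℝ)
    (hQsymm : Q.IsSymm) (hQpos : Q.PosDef) :
    ∀ h : ℝ,
      (1 / (2 * Real.pi * Real.sqrt Q.det)) *
        ∫ α : Fin 2 → ℝ, ∫ t in (0:ℝ)..1,
          psi φ t (h + (1 / 2) * (Q⁻¹.mulVec α ⬝ᵥ α)) =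
      ∫ s in Set.Ioi h, φ s := by
  intro h
  have hcont : Continuous φ := hsmooth.continuous
  -- matrix square root facts
  obtain ⟨B, hBB, hBsd⟩ := sqrt_facts Q hQpos.posSemidef
  have hBsymm : Bᵀ = B := by
    have := hBsd.isHermitian
    rwa [Matrix.IsHermitian, Matrix.conjTranspose_eq_transpose_of_trivial] at this
  have hdetB : B.det * B.det = Q.det := by rw [← Matrix.det_mul, hBB]
  have hdetQ : 0 < Q.det := hQpos.det_pos
  have hdetBnn : 0 ≤ B.det := by
    rw [hBsd.isHermitian.det_eq_prod_eigenvalues]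
    exact Finset.prod_nonneg fun i _ => hBsd.eigenvalues_nonneg i
  have hdetBpos : 0 < B.det := by nlinarith
  have hdetBeq : B.det = Real.sqrt Q.det := by
    rw [← hdetB, Real.sqrt_mul_self hdetBnn]
  have hdetne : B.det ≠ 0 := ne_of_gt hdetBpos
  -- inner integral
  have hstep1 : (∫ α : Fin 2 → ℝ, ∫ t in (0:ℝ)..1,
        psi φ t (h + (1 / 2) * (Q⁻¹.mulVec α ⬝ᵥ α)))
      = ∫ α : Fin 2 → ℝ, φ (h + 1/2 * (Q⁻¹.mulVec α ⬝ᵥ α)) := by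
    congr 1
    funext α
    exact lemA φ hsupp hsmooth _
  rw [hstep1]
  -- change of variables α = B β
  have hq : Continuous fun α : Fin 2 → ℝ => Q⁻¹.mulVec α ⬝ᵥ α := by
    simp only [Matrix.mulVec, dotProduct]
    exact continuous_finset_sum _ fun i _ =>
      (continuous_finset_sum _ fun j _ =>
        (continuous_const.mul (continuous_apply j))).mul (continuous_apply i)
  have hg : Continuous fun α : Fin 2 → ℝ => φ (h + 1/2 * (Q⁻¹.mulVec α ⬝ᵥ α)) :=
    hcont.comp (continuous_const.add (continuous_const.mul hq))
  rw [cov B hdetne _ hg]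
  -- simplify the quadratic form
  have hquad : ∀ β : Fin 2 → ℝ,
      Q⁻¹.mulVec (B.mulVec β) ⬝ᵥ (B.mulVec β) = β ⬝ᵥ β := by
    intro β
    have hBinv : IsUnit B.det := isUnit_iff_ne_zero.mpr hdetne
    have key : B * Q⁻¹ * B = 1 := by
      rw [← hBB, Matrix.mul_inv_rev]
      calc B * (B⁻¹ * B⁻¹) * B = (B * B⁻¹) * (B⁻¹ * B) := by simp only [mul_assoc]
      _ = 1 := by rw [Matrix.mul_nonsing_inv _ hBinv, Matrix.nonsing_inv_mul _ hBinv, one_mul]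
    calc Q⁻¹.mulVec (B.mulVec β) ⬝ᵥ (B.mulVec β)
        = Bᵀ.mulVec (Q⁻¹.mulVec (B.mulVec β)) ⬝ᵥ β := by
          rw [Matrix.dotProduct_mulVec, ← Matrix.mulVec_transpose]
      _ = β ⬝ᵥ β := by
          rw [Matrix.mulVec_mulVec, Matrix.mulVec_mulVec, hBsymm, key, Matrix.one_mulVec]
  have hstep2 : (∫ β : Fin 2 → ℝ, φ (h + 1/2 * (Q⁻¹.mulVec (B.mulVec β) ⬝ᵥ (B.mulVec β))))
      = ∫ β : Fin 2 → ℝ, φ (h + 1/2 * (β ⬝ᵥ β)) := by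
    congr 1
    funext β
    rw [hquad β]
  rw [hstep2, euc φ hsupp hcont h]
  -- constants
  rw [abs_of_pos hdetBpos, hdetBeq]
  have hπ : Real.pi ≠ 0 := Real.pi_ne_zero
  have hs : Real.sqrt Q.det ≠ 0 := ne_of_gt (Real.sqrt_pos.mpr hdetQ)
  field_simp
end

section
/- Let φ: ℝ → ℝ be compactly supported, twice continuously differentiable, satisfy Σ_{j∈ℤ} j^m φ(t − j) = t^m for all t ∈ ℝ and m = 0, 1, 2, and satisfy ∫_ℝ φ(t) dt = 1. Define ψ(q, s) := Σ_{j∈ℤ} max(j − q + s, 0) · φ''(q − j). Then ∫_ℝ ∫_0^1 ψ(q, v) dq dv = 1. -/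
open MeasureTheory

/-- Telescoping sum of shifted unit-interval integrals. -/
lemma sum_shift_integral (f : ℝ → ℝ) (hf : Continuous f) (a : ℤ) :
    ∀ b : ℤ, a ≤ b →
      ∑ j ∈ Finset.Icc a b, ∫ t in (-(j:ℝ))..(1 - (j:ℝ)), f t
        = ∫ t in (-(b:ℝ))..(1 - (a:ℝ)), f t := by
  refine Int.le_induction ?_ ?_
  · simp
  · intro b hab ih
    have hins : Finset.Icc a (b + 1) = insert (b + 1) (Finset.Icc a b) := by
      ext x
      simp only [Finset.mem_Icc, Finset.mem_insert]
      omega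
    rw [hins, Finset.sum_insert (by simp), ih]
    have h2 : (-(((b:ℤ)+1:ℤ)) : ℝ) = -((b:ℝ)+1) := by push_cast; ring
    have h3 : (1 : ℝ) - (((b:ℤ)+1:ℤ) : ℝ) = -(b:ℝ) := by push_cast; ring
    rw [h2, h3]
    rw [← intervalIntegral.integral_add_adjacent_intervals
      (a := -((b:ℝ)+1)) (b := -(b:ℝ)) (c := 1 - (a:ℝ))
      (hf.intervalIntegrable _ _) (hf.intervalIntegrable _ _)]

theorem stmt15 (φ : ℝ → ℝ)
    (hsupp : HasCompactSupport φ)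
    (hsmooth : ContDiff ℝ 2 φ)
    (hA1 : ∀ m : ℕ, m ≤ 2 → ∀ t : ℝ,
      ∑' j : ℤ, (j : ℝ) ^ m * φ (t - (j : ℝ)) = t ^ m)
    (hA5 : ∫ t : ℝ, φ t = 1) :
    ∫ v : ℝ, ∫ q in (0:ℝ)..1, psi φ q v = 1 := by
  set g : ℝ → ℝ := deriv (deriv φ) with hg
  -- basic regularity
  have hd1 : Differentiable ℝ φ := hsmooth.differentiable (by norm_num)
  have hc1 : ContDiff ℝ 1 (deriv φ) := by
    have := (contDiff_succ_iff_deriv (n := 1)).mp (by exact_mod_cast hsmooth)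
    exact this.2.2
  have hd2 : Differentiable ℝ (deriv φ) := hc1.differentiable one_ne_zero
  have hgc : Continuous g := by
    have := (contDiff_succ_iff_deriv (n := 0)).mp (by exact_mod_cast hc1)
    exact this.2.2.continuous
  -- support bound
  obtain ⟨R, hR1, hRsub⟩ : ∃ R, 1 < R ∧ tsupport φ ⊆ Metric.closedBall 0 R :=
    hsupp.isCompact.isBounded.subset_closedBall_lt 1 0
  have hRsub' : tsupport φ ⊆ Set.Icc (-R) R := by
    rwa [Real.closedBall_eq_Icc, zero_sub, zero_add] at hRsub
  have hout : ∀ t : ℝ, t ∉ Set.Icc (-R) R → t ∉ tsupport φ :=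
    fun t ht hmem => ht (hRsub' hmem)
  have hφ0 : ∀ t : ℝ, t ∉ Set.Icc (-R) R → φ t = 0 :=
    fun t ht => image_eq_zero_of_notMem_tsupport (hout t ht)
  have hφ'0 : ∀ t : ℝ, t ∉ Set.Icc (-R) R → deriv φ t = 0 := by
    intro t ht
    by_contra h
    exact hout t ht (support_deriv_subset (Function.mem_support.mpr h))
  have htsub : tsupport (deriv φ) ⊆ tsupport φ :=
    closure_minimal support_deriv_subset isClosed_closure
  have hg0 : ∀ t : ℝ, t ∉ Set.Icc (-R) R → g t = 0 := by
    intro t ht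
    by_contra h
    exact hout t ht (htsub (support_deriv_subset (Function.mem_support.mpr h)))
  -- the finite index set
  set a : ℤ := -⌈R⌉ - 1 with ha
  set b : ℤ := ⌈R⌉ + 2 with hb
  have hceil : (R : ℝ) ≤ ⌈R⌉ := Int.le_ceil R
  have hceil1 : (1:ℤ) ≤ ⌈R⌉ := by
    have : (0:ℤ) < ⌈R⌉ := Int.ceil_pos.mpr (by linarith)
    omega
  have hab : a ≤ b := by omega
  -- pointwise formula for psi as finite sum
  have hpsi_eq : ∀ v : ℝ, ∀ q ∈ Set.Icc (0:ℝ) 1,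
      psi φ q v = ∑ j ∈ Finset.Icc a b, max ((j:ℝ) - q + v) 0 * g (q - j) := by
    intro v q hq
    simp only [psi, ← hg]
    refine tsum_eq_sum ?_
    intro j hj
    have hzero : g (q - j) = 0 := by
      apply hg0
      simp only [Finset.mem_Icc, not_and_or, not_le] at hj
      rcases hj with hj | hj
      · intro hm
        have hj' : (j : ℝ) ≤ -(⌈R⌉:ℝ) - 2 := by
          have : j ≤ -⌈R⌉ - 2 := by omega
          exact_mod_cast this
        have h1 : q - j ≥ (⌈R⌉ : ℝ) + 2 := by linarith [hq.1]
        have h2 := hm.2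
        linarith
      · intro hm
        have hj' : ((⌈R⌉:ℝ) + 3) ≤ (j:ℝ) := by
          have : ⌈R⌉ + 3 ≤ j := by omega
          exact_mod_cast (by exact_mod_cast this : ((⌈R⌉ + 3 : ℤ) : ℝ) ≤ (j:ℝ))
        have h1 : q - j ≤ 1 - ((⌈R⌉:ℝ) + 3) := by linarith [hq.2]
        have h2 := hm.1
        linarith
    rw [hzero, mul_zero]
  -- the inner integral equals φ v
  have key : ∀ v : ℝ, (∫ q in (0:ℝ)..1, psi φ q v) = φ v := by
    intro v
    set f : ℝ → ℝ := fun t => max (v - t) 0 * g t with hf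
    have hfc : Continuous f := ((continuous_const.sub continuous_id).max continuous_const).mul hgc
    have step1 : (∫ q in (0:ℝ)..1, psi φ q v)
        = ∑ j ∈ Finset.Icc a b, ∫ q in (0:ℝ)..1, max ((j:ℝ) - q + v) 0 * g (q - j) := by
      have e1 : (∫ q in (0:ℝ)..1, psi φ q v)
          = ∫ q in (0:ℝ)..1, ∑ j ∈ Finset.Icc a b, max ((j:ℝ) - q + v) 0 * g (q - j) :=
        intervalIntegral.integral_congr (fun q hq =>
          hpsi_eq v q (by rwa [Set.uIcc_of_le zero_le_one] at hq))
      rw [e1]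
      refine intervalIntegral.integral_finset_sum ?_
      intro j _
      apply Continuous.intervalIntegrable
      exact (((continuous_const.sub continuous_id).add continuous_const).max
        continuous_const).mul (hgc.comp (continuous_id.sub continuous_const))
    have step2 : ∀ j : ℤ, (∫ q in (0:ℝ)..1, max ((j:ℝ) - q + v) 0 * g (q - j))
        = ∫ t in (-(j:ℝ))..(1 - (j:ℝ)), f t := by
      intro j
      have e2 : (fun q : ℝ => max ((j:ℝ) - q + v) 0 * g (q - j))
          = fun q => f (q - (j:ℝ)) := by
        funext q
        simp only [hf]
        rw [show (j:ℝ) - q + v = v - (q - j) by ring]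
      rw [e2, intervalIntegral.integral_comp_sub_right f (j:ℝ), zero_sub]
    have step3 : (∫ q in (0:ℝ)..1, psi φ q v) = ∫ t in (-(b:ℝ))..(1 - (a:ℝ)), f t := by
      rw [step1, Finset.sum_congr rfl (fun j _ => step2 j)]
      exact sum_shift_integral f hfc a b hab
    rw [step3]
    set c : ℝ := -(b:ℝ) with hcdef
    set d : ℝ := 1 - (a:ℝ) with hddef
    have hcR : c ≤ -R - 2 := by
      simp only [hcdef, hb]; push_cast; linarith
    have hdR : R + 2 ≤ d := by
      simp only [hddef, ha]; push_cast; linarith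
    have hcd : c ≤ d := by linarith
    by_cases hv : v ≤ c
    · have hint : (∫ t in c..d, f t) = 0 := by
        have : Set.EqOn f (fun _ => (0:ℝ)) (Set.uIcc c d) := by
          intro t ht
          rw [Set.uIcc_of_le hcd] at ht
          simp only [hf]
          rw [max_eq_right (by linarith [ht.1] : v - t ≤ 0), zero_mul]
        rw [intervalIntegral.integral_congr this, intervalIntegral.integral_zero]
      rw [hint,
        hφ0 v (by simp only [Set.mem_Icc, not_and_or, not_le]; left; linarith)]
    · push_neg at hv
      set e : ℝ := max v d with hedef
      have hde : d ≤ e := le_max_right _ _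
      have hve : v ≤ e := le_max_left _ _
      have hext : (∫ t in c..d, f t) = ∫ t in c..e, f t := by
        rw [← intervalIntegral.integral_add_adjacent_intervals (a := c) (b := d) (c := e)
          (hfc.intervalIntegrable _ _) (hfc.intervalIntegrable _ _)]
        have hzero : (∫ t in d..e, f t) = 0 := by
          have : Set.EqOn f (fun _ => (0:ℝ)) (Set.uIcc d e) := by
            intro t ht
            rw [Set.uIcc_of_le hde] at ht
            simp only [hf]
            rw [hg0 t (by
              simp only [Set.mem_Icc, not_and_or, not_le]; right; linarith [ht.1]), mul_zero]
          rw [intervalIntegral.integral_congr this, intervalIntegral.integral_zero]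
        rw [hzero, add_zero]
      rw [hext]
      have hcv : c ≤ v := hv.le
      rw [← intervalIntegral.integral_add_adjacent_intervals (a := c) (b := v) (c := e)
        (hfc.intervalIntegrable _ _) (hfc.intervalIntegrable _ _)]
      have hright : (∫ t in v..e, f t) = 0 := by
        have : Set.EqOn f (fun _ => (0:ℝ)) (Set.uIcc v e) := by
          intro t ht
          rw [Set.uIcc_of_le hve] at ht
          simp only [hf]
          rw [max_eq_right (by linarith [ht.1] : v - t ≤ 0), zero_mul]
        rw [intervalIntegral.integral_congr this, intervalIntegral.integral_zero]
      rw [hright, add_zero]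
      have hcongr : (∫ t in c..v, f t) = ∫ t in c..v, (v - t) * g t := by
        apply intervalIntegral.integral_congr
        intro t ht
        rw [Set.uIcc_of_le hcv] at ht
        simp only [hf]
        rw [max_eq_left (by linarith [ht.2] : 0 ≤ v - t)]
      rw [hcongr]
      have hG : ∀ t : ℝ, HasDerivAt (fun t => (v - t) * deriv φ t + φ t) ((v - t) * g t) t := by
        intro t
        have h1 : HasDerivAt (fun t : ℝ => v - t) (-1) t := by
          simpa using (hasDerivAt_id t).const_sub v
        have h2 : HasDerivAt (deriv φ) (g t) t := (hd2 t).hasDerivAt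
        have h3 := (h1.mul h2).add (hd1 t).hasDerivAt
        exact h3.congr_deriv (by ring)
      rw [intervalIntegral.integral_eq_sub_of_hasDerivAt (fun t _ => hG t)
        (((continuous_const.sub continuous_id).mul hgc).intervalIntegrable _ _)]
      have hnc : c ∉ Set.Icc (-R) R := by
        simp only [Set.mem_Icc, not_and_or, not_le]; left; linarith
      rw [hφ0 c hnc, hφ'0 c hnc]
      ring
  calc ∫ v : ℝ, ∫ q in (0:ℝ)..1, psi φ q v = ∫ v : ℝ, φ v :=
        integral_congr_ae (Filter.Eventually.of_forall key)
    _ = 1 := hA5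
end
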